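/- arXiv:1212.1231 — 5 statements merged into one kernel-verified Lean document; each statement's English description precedes it below -/
import Mathlib

section
/- Let f : [a,b] → ℝ∪{±∞} be a lower-semicontinuous function and let s : [c,d] → [a,b] be a nondecreasing continuous function. Suppose s is differentiable at a point t ∈ (c,d) with s'(t) ≠ 0, and that f(s(t)) is finite. Then |∇(f∘s)|(t) = |∇f|(s(t)) · |s'(t)|. -/
open Filter Topology MeasureTheory Set NNReal ENNReal Pointwise

/-- Convert an extended real to an extended nonnegative real (negatives map to `0`). -/
noncomputable def EReal.toENNReal' (x : EReal) : ℝ≥0∞ :=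
  if x = ⊤ then ⊤ else ENNReal.ofReal x.toReal

section MetricDefs

variable {X : Type*} [MetricSpace X]

/-- The slope `|∇f|(xc) = limsup_{x → xc, x ≠ xc} (f(xc) − f(x))⁺ / d(xc,x)`. -/
noncomputable def mSlope (f : X → EReal) (xc : X) : ℝ≥0∞ :=
  Filter.limsup (fun x => (f xc - f x).toENNReal' / edist xc x) (𝓝[≠] xc)

/-- The slope of `f` at `xc` relative to a set `S`. -/
noncomputable def mSlopeOn (f : X → EReal) (S : Set X) (xc : X) : ℝ≥0∞ :=
  Filter.limsup (fun x => (f xc - f x).toENNReal' / edist xc x) (𝓝[S \ {xc}] xc)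

/-- The limiting slope `|∇f|⁻(xc) = liminf_{x → xc, f(x) → f(xc)} |∇f|(x)`. -/
noncomputable def limSlope (f : X → EReal) (xc : X) : ℝ≥0∞ :=
  Filter.liminf (fun x => mSlope f x)
    (Filter.comap (fun x => (x, f x)) (𝓝 (xc, f xc)))

/-- `γ` has metric derivative `m` at `t`:  `lim_{s→t} d(γ(s),γ(t))/|s−t| = m`. -/
def HasMetricDerivAt (γ : ℝ → X) (t : ℝ) (m : ℝ) : Prop :=
  Tendsto (fun s => dist (γ s) (γ t) / |s - t|) (𝓝[≠] t) (𝓝 m)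

/-- `γ` is absolutely continuous on `[a,b]`. -/
def AbsContOn (γ : ℝ → X) (a b : ℝ) : Prop :=
  ∃ m : ℝ → ℝ, IntegrableOn m (Icc a b) ∧
    ∀ s t : ℝ, a ≤ s → s ≤ t → t ≤ b → dist (γ s) (γ t) ≤ ∫ τ in s..t, m τ

/-- `γ : [a,b] → X` is a near-steepest descent curve for `f`. -/
def NearSteepestDescentCurve (f : X → EReal) (a b : ℝ) (γ : ℝ → X) : Prop :=
  LipschitzOnWith 1 γ (Icc a b) ∧
  AntitoneOn (fun t => f (γ t)) (Icc a b) ∧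
  ∀ᵐ t ∂(volume.restrict (Icc a b)), ∃ d : ℝ,
    HasDerivAt (fun τ => (f (γ τ)).toReal) d t ∧
    limSlope f (γ t) ≤ ENNReal.ofReal |d|

/-- `γ : [a,b] → X` is a curve of near-maximal slope for `f`. -/
def NearMaximalSlopeCurve (f : X → EReal) (a b : ℝ) (γ : ℝ → X) : Prop :=
  AbsContOn γ a b ∧
  (∀ᵐ t ∂(volume.restrict (Icc a b)), ∃ m : ℝ,
      HasMetricDerivAt γ t m ∧ ENNReal.ofReal m = limSlope f (γ t)) ∧
  AntitoneOn (fun t => f (γ t)) (Icc a b) ∧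
  ∀ᵐ t ∂(volume.restrict (Icc a b)), ∃ d : ℝ,
    HasDerivAt (fun τ => (f (γ τ)).toReal) d t ∧
    (limSlope f (γ t)) ^ 2 ≤ ENNReal.ofReal (-d)

/-- `S` is a metric segment between `x` and `y`. -/
def IsMetricSegment (S : Set X) (x y : X) : Prop :=
  ∃ (a b : ℝ) (ω : ℝ → X), a ≤ b ∧
    (∀ s ∈ Icc a b, ∀ t ∈ Icc a b, dist (ω s) (ω t) = |s - t|) ∧
    ω '' Icc a b = S ∧ ω a = x ∧ ω b = y

/-- A subset `U` is metrically convex (in the induced metric). -/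
def IsConvexMetricSubset (U : Set X) : Prop :=
  ∀ x ∈ U, ∀ y ∈ U, x ≠ y → ∃ S ⊆ U, IsMetricSegment S x y

/-- `X` is a locally convex metric space. -/
def LocallyConvexMetricSpace (X : Type*) [MetricSpace X] : Prop :=
  ∀ x : X, ∃ U ∈ 𝓝 x, IsConvexMetricSubset U

/-- `f` is continuous on slope-bounded sets. -/
def ContinuousOnSlopeBoundedSets (f : X → EReal) : Prop :=
  ∀ xc : X, (∃ r : ℝ, f xc = (r : EReal)) →
    ∀ x : ℕ → X, Tendsto x atTop (𝓝 xc) →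
      (∃ C : ℝ≥0∞, C ≠ ⊤ ∧ ∀ i, mSlope f (x i) ≤ C) →
      (∃ C : ℝ, ∀ i, dist (x i) xc ≤ C) →
      (∃ C : ℝ, ∀ i, f (x i) ≤ (C : EReal)) →
      Tendsto (fun i => f (x i)) atTop (𝓝 (f xc))

end MetricDefs

section EuclideanDefs


variable {H : Type*} [NormedAddCommGroup H] [InnerProductSpace ℝ H]

/-- The Fréchet subdifferential `∂̂f(xc)`. -/
def frechetSubdiff (f : H → EReal) (xc : H) : Set H :=
  {v | (∃ r : ℝ, f xc = (r : EReal)) ∧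
    ∀ ε : ℝ, 0 < ε → ∀ᶠ x in 𝓝 xc,
      f xc + (((inner ℝ v (x - xc) : ℝ) - ε * ‖x - xc‖ : ℝ) : EReal) ≤ f x}

/-- The limiting subdifferential `∂f(xc)`. -/
def limitingSubdiff (f : H → EReal) (xc : H) : Set H :=
  {v | (∃ r : ℝ, f xc = (r : EReal)) ∧
    ∃ (x : ℕ → H) (w : ℕ → H), (∀ i, w i ∈ frechetSubdiff f (x i)) ∧
      Tendsto x atTop (𝓝 xc) ∧ Tendsto (fun i => f (x i)) atTop (𝓝 (f xc)) ∧
      Tendsto w atTop (𝓝 v)}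

/-- The horizon subdifferential `∂^∞ f(xc)`. -/
def horizonSubdiff (f : H → EReal) (xc : H) : Set H :=
  {v | (∃ r : ℝ, f xc = (r : EReal)) ∧
    ∃ (τ : ℕ → ℝ) (x : ℕ → H) (w : ℕ → H),
      (∀ i, 0 < τ i) ∧ Tendsto τ atTop (𝓝 0) ∧
      (∀ i, w i ∈ frechetSubdiff f (x i)) ∧
      Tendsto x atTop (𝓝 xc) ∧ Tendsto (fun i => f (x i)) atTop (𝓝 (f xc)) ∧
      Tendsto (fun i => τ i • w i) atTop (𝓝 v)}

/-- The Clarke subdifferential `∂_c f(xc) = cl conv [∂f(xc) + ∂^∞ f(xc)]`. -/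
noncomputable def clarkeSubdiff (f : H → EReal) (xc : H) : Set H :=
  closure (convexHull ℝ (limitingSubdiff f xc + horizonSubdiff f xc))

/-- The (non-convex) conical hull `{λ v : λ ≥ 0, v ∈ S}`. -/
def coneHull (S : Set H) : Set H := {w | ∃ lam : ℝ, 0 ≤ lam ∧ ∃ v ∈ S, w = lam • v}

open Classical in
/-- The extended-real-valued indicator function of a set. -/
noncomputable def erealIndicator (Q : Set H) : H → EReal := fun x => if x ∈ Q then 0 else ⊤

/-- The limiting normal cone `N_Q(xc) = ∂ δ_Q(xc)`. -/
def limitingNormalCone (Q : Set H) (xc : H) : Set H := limitingSubdiff (erealIndicator Q) xc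

/-- The Fréchet normal cone `N̂_Q(xc) = ∂̂ δ_Q(xc)`. -/
def frechetNormalCone (Q : Set H) (xc : H) : Set H := frechetSubdiff (erealIndicator Q) xc

/-- `Q` is Clarke regular at `xc`. -/
def ClarkeRegularAt (Q : Set H) (xc : H) : Prop :=
  xc ∈ Q ∧ (∃ ε : ℝ, 0 < ε ∧ IsClosed (Q ∩ Metric.closedBall xc ε)) ∧
  limitingNormalCone Q xc = frechetNormalCone Q xc

/-- `f` is subdifferentially regular at `xc`: `f(xc)` is finite and `epi f` is
Clarke regular at `(xc, f(xc))` as a subset of `H × ℝ` (with the euclidean product structure). -/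
def SubdiffRegularAt (f : H → EReal) (xc : H) : Prop :=
  (∃ r : ℝ, f xc = (r : EReal)) ∧
  ClarkeRegularAt {p : WithLp 2 (H × ℝ) | f p.ofLp.1 ≤ (p.ofLp.2 : EReal)}
    ((WithLp.equiv 2 (H × ℝ)).symm (xc, (f xc).toReal))

/-- The tangent cone `T_Q(xc)`. -/
def tangentConeAt' (Q : Set H) (xc : H) : Set H :=
  {v | ∃ (lam : ℕ → ℝ) (x : ℕ → H), (∀ i, x i ∈ Q) ∧ Tendsto lam atTop atTop ∧
    Tendsto (fun i => lam i • (x i - xc)) atTop (𝓝 v)}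

/-- The limiting slope of `f` admits a chain rule. -/
def LimitingSlopeChainRule (f : H → EReal) : Prop :=
  ∀ (a b : ℝ) (x : ℝ → H), AbsContOn x a b →
    AntitoneOn (fun t => f (x t)) (Icc a b) →
    (∀ᵐ t ∂(volume.restrict (Icc a b)), (limitingSubdiff f (x t)).Nonempty) →
    ∀ᵐ t ∂(volume.restrict (Icc a b)), ∃ (d : ℝ) (x' : H),
      HasDerivAt (fun τ => (f (x τ)).toReal) d t ∧ HasDerivAt x x' t ∧
      ∀ v ∈ limitingSubdiff f (x t), d = (inner ℝ v x' : ℝ)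

/-- `f` is locally Lipschitz continuous on its domain. -/
def LocLipschitzOnDomain (f : H → EReal) : Prop :=
  ∀ x : H, f x ≠ ⊤ → ∃ (K : ℝ≥0) (ε : ℝ), 0 < ε ∧
    (∀ y ∈ Metric.ball x ε, f y ≠ ⊤ → ∃ r : ℝ, f y = (r : EReal)) ∧
    LipschitzOnWith K (fun y => (f y).toReal) (Metric.ball x ε ∩ {y | f y ≠ ⊤})

end EuclideanDefs

section Semialgebraic

/-- A semialgebraic subset of `ℝᵐ`: a finite union of sets defined by finitely many
polynomial equalities and strict inequalities. -/
def IsSemialgebraic {m : ℕ} (S : Set (EuclideanSpace ℝ (Fin m))) : Prop :=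
  ∃ (k : ℕ) (P Q : Fin k → Finset (MvPolynomial (Fin m) ℝ)),
    S = ⋃ i : Fin k, {x | (∀ p ∈ P i, MvPolynomial.eval (fun j => x j) p = 0) ∧
                         (∀ q ∈ Q i, MvPolynomial.eval (fun j => x j) q < 0)}

/-- A semialgebraic function: one whose epigraph is semialgebraic. -/
def IsSemialgebraicFn {n : ℕ} (f : EuclideanSpace ℝ (Fin n) → EReal) : Prop :=
  IsSemialgebraic {y : EuclideanSpace ℝ (Fin (n + 1)) |
    f ((WithLp.equiv 2 _).symm (fun i : Fin n => y i.castSucc)) ≤ ((y (Fin.last n) : ℝ) : EReal)}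

end Semialgebraic

section LimsupAux

variable {α : Type*} {F : Filter α}

lemma my_limsup_map {β : Type*} (g : α → β) (u : β → ℝ≥0∞) :
    Filter.limsup u (Filter.map g F) = Filter.limsup (fun x => u (g x)) F := by
  simp only [Filter.limsup_eq, Filter.eventually_map]

lemma my_limsup_mul_le {u v : α → ℝ≥0∞} {L : ℝ≥0∞}
    (hL0 : L ≠ 0) (hLT : L ≠ ⊤) (hv : Tendsto v F (𝓝 L)) :
    Filter.limsup (fun x => u x * v x) F ≤ Filter.limsup u F * L := by
  have key : ∀ c : ℝ≥0∞, c ≠ ⊤ → (∀ᶠ x in F, v x ≤ c) →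
      Filter.limsup (fun x => u x * v x) F ≤ Filter.limsup u F * c := by
    intro c hc hev
    calc Filter.limsup (fun x => u x * v x) F
        ≤ Filter.limsup (fun x => c * u x) F := by
          refine Filter.limsup_le_limsup ?_
          filter_upwards [hev] with x hx
          rw [mul_comm c (u x)]
          exact mul_le_mul_right hx (u x)
      _ = c * Filter.limsup u F := ENNReal.limsup_const_mul_of_ne_top hc
      _ = Filter.limsup u F * c := mul_comm _ _
  rcases eq_or_ne (Filter.limsup u F) ⊤ with hM | hM
  · rw [hM, top_mul hL0]; exact le_top
  rcases eq_or_ne (Filter.limsup u F) 0 with h0 | h0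
  · have h1 : Filter.limsup (fun x => u x * v x) F ≤ Filter.limsup u F * (L + 1) :=
      key (L + 1) (by simp [hLT]) (hv.eventually_le_const (ENNReal.lt_add_right hLT one_ne_zero))
    rw [h0, zero_mul] at h1 ⊢
    exact h1
  refine ENNReal.le_of_forall_pos_le_add fun ε hε _hfin => ?_
  set δ : ℝ≥0∞ := (ε : ℝ≥0∞) / Filter.limsup u F with hδ
  have hδ0 : δ ≠ 0 := by
    simp [hδ, ENNReal.div_eq_zero_iff, hM, ENNReal.coe_ne_zero.2 hε.ne']
  have hδT : δ ≠ ⊤ := by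
    simp [hδ, ENNReal.div_eq_top, h0, ENNReal.coe_ne_top]
  have h1 : Filter.limsup (fun x => u x * v x) F ≤ Filter.limsup u F * (L + δ) :=
    key (L + δ) (by simp [ENNReal.add_eq_top, hLT, hδT])
      (hv.eventually_le_const (ENNReal.lt_add_right hLT hδ0))
  calc Filter.limsup (fun x => u x * v x) F
      ≤ Filter.limsup u F * (L + δ) := h1
    _ = Filter.limsup u F * L + Filter.limsup u F * δ := by rw [mul_add]
    _ = Filter.limsup u F * L + ε := by rw [hδ, ENNReal.mul_div_cancel h0 hM]

lemma my_limsup_mul_tendsto {u v : α → ℝ≥0∞} {L : ℝ≥0∞}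
    (hL0 : L ≠ 0) (hLT : L ≠ ⊤) (hv : Tendsto v F (𝓝 L)) :
    Filter.limsup (fun x => u x * v x) F = Filter.limsup u F * L := by
  refine le_antisymm (my_limsup_mul_le hL0 hLT hv) ?_
  have hinv : Tendsto (fun x => (v x)⁻¹) F (𝓝 L⁻¹) := ENNReal.tendsto_inv_iff.2 hv
  have hev : ∀ᶠ x in F, v x ∈ Ioo (0 : ℝ≥0∞) ⊤ :=
    hv (Ioo_mem_nhds (pos_iff_ne_zero.2 hL0) (lt_top_iff_ne_top.2 hLT))
  have h1 : Filter.limsup u F ≤ Filter.limsup (fun x => u x * v x) F * L⁻¹ := by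
    have h2 := my_limsup_mul_le (u := fun x => u x * v x) (v := fun x => (v x)⁻¹)
      (ENNReal.inv_ne_zero.2 hLT) (ENNReal.inv_ne_top.2 hL0) hinv
    refine le_trans (le_of_eq (Filter.limsup_congr ?_)) h2
    filter_upwards [hev] with x hx
    rw [mul_assoc, ENNReal.mul_inv_cancel hx.1.ne' hx.2.ne, mul_one]
  calc Filter.limsup u F * L
      ≤ Filter.limsup (fun x => u x * v x) F * L⁻¹ * L := mul_le_mul_left h1 L
    _ = Filter.limsup (fun x => u x * v x) F := by
        rw [mul_assoc, ENNReal.inv_mul_cancel hL0 hLT, mul_one]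

end LimsupAux

/-- Slope of a composition. -/
theorem statement0 (a b c d : ℝ) (f : ℝ → EReal) (s : ℝ → ℝ)
    (hf : LowerSemicontinuousOn f (Icc a b))
    (hs_mono : MonotoneOn s (Icc c d)) (hs_cont : ContinuousOn s (Icc c d))
    (hs_maps : MapsTo s (Icc c d) (Icc a b))
    (t : ℝ) (ht : t ∈ Ioo c d) (s' : ℝ) (hderiv : HasDerivAt s s' t) (hs' : s' ≠ 0)
    (hfin : ∃ r : ℝ, f (s t) = (r : EReal)) :
    mSlopeOn (fun τ => f (s τ)) (Icc c d) t
      = mSlopeOn f (Icc a b) (s t) * ENNReal.ofReal |s'| := by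
  obtain ⟨htc, htd⟩ := ht
  set F := 𝓝[Icc c d \ {t}] t with hF
  set G := 𝓝[Icc a b \ {s t}] (s t) with hG
  have hslope : Tendsto (slope s t) (𝓝[≠] t) (𝓝 s') := hasDerivAt_iff_tendsto_slope.1 hderiv
  -- eventually s τ ≠ s t
  have hne : ∀ᶠ τ in 𝓝[≠] t, s τ ≠ s t := by
    filter_upwards [hslope.eventually_ne hs'] with τ h1 heq
    exact h1 (by simp [slope_def_field, heq])
  have hFle : F ≤ 𝓝[≠] t := nhdsWithin_mono _ fun τ hτ => hτ.2
  -- ratio tendsto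
  have hratio : Tendsto (fun τ => edist (s t) (s τ) / edist t τ) (𝓝[≠] t)
      (𝓝 (ENNReal.ofReal |s'|)) := by
    have h1 : Tendsto (fun τ => ENNReal.ofReal |slope s t τ|) (𝓝[≠] t)
        (𝓝 (ENNReal.ofReal |s'|)) :=
      (ENNReal.continuous_ofReal.tendsto _).comp ((continuous_abs.tendsto _).comp hslope)
    refine h1.congr' ?_
    filter_upwards [self_mem_nhdsWithin] with τ (hτ : τ ≠ t)
    have hpos : 0 < |τ - t| := abs_pos.2 (sub_ne_zero.2 hτ)
    rw [slope_def_field, abs_div, ENNReal.ofReal_div_of_pos hpos,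
      edist_dist, edist_dist, Real.dist_eq, Real.dist_eq,
      abs_sub_comm (s t) (s τ), abs_sub_comm t τ]
  -- map s F = G
  have hmapsto : Tendsto s F G := by
    rw [hG, tendsto_nhdsWithin_iff]
    constructor
    · exact (hderiv.continuousAt.continuousWithinAt : Tendsto s F (𝓝 (s t)))
    · filter_upwards [self_mem_nhdsWithin, hFle hne] with τ hτ hτne
      exact ⟨hs_maps hτ.1, hτne⟩
  have hmapeq : Filter.map s F = G := by
    refine le_antisymm hmapsto fun U hU => ?_
    rw [Filter.mem_map, hF, mem_nhdsWithin] at hU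
    obtain ⟨V, hVopen, htV, hVsub⟩ := hU
    obtain ⟨ε, hε, hball⟩ := Metric.isOpen_iff.1 (hVopen.inter isOpen_Ioo) t ⟨htV, htc, htd⟩
    obtain ⟨W, hWopen, htW, hWsub⟩ := mem_nhdsWithin.1 hne
    obtain ⟨δ, hδ, hball'⟩ := Metric.isOpen_iff.1 hWopen t htW
    set m := min ε δ with hm
    have hm0 : 0 < m := lt_min hε hδ
    set t₁ := t - m / 2 with ht₁
    set t₂ := t + m / 2 with ht₂
    have hmem : ∀ τ : ℝ, τ ∈ Icc t₁ t₂ → τ ∈ V ∩ Ioo c d := by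
      intro τ hτ
      apply hball
      rw [Metric.mem_ball, Real.dist_eq]
      have h1 : |τ - t| ≤ m / 2 := by
        rw [abs_le]; constructor <;> [skip; skip] <;>
          · simp only [ht₁, ht₂, mem_Icc] at hτ; linarith [hτ.1, hτ.2]
      linarith [min_le_left ε δ, h1]
    have hsne : ∀ τ : ℝ, τ ∈ Icc t₁ t₂ → τ ≠ t → s τ ≠ s t := by
      intro τ hτ hτt
      apply hWsub
      refine ⟨hball' ?_, hτt⟩
      rw [Metric.mem_ball, Real.dist_eq]
      have h1 : |τ - t| ≤ m / 2 := by
        rw [abs_le]; constructor <;> [skip; skip] <;>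
          · simp only [ht₁, ht₂, mem_Icc] at hτ; linarith [hτ.1, hτ.2]
      linarith [min_le_right ε δ, h1]
    have ht₁mem : t₁ ∈ Icc t₁ t₂ := ⟨le_refl _, by simp only [ht₁, ht₂]; linarith⟩
    have ht₂mem : t₂ ∈ Icc t₁ t₂ := ⟨by simp only [ht₁, ht₂]; linarith, le_refl _⟩
    have ht₁Icc : t₁ ∈ Icc c d := Ioo_subset_Icc_self (hmem t₁ ht₁mem).2
    have ht₂Icc : t₂ ∈ Icc c d := Ioo_subset_Icc_self (hmem t₂ ht₂mem).2
    have htIcc : t ∈ Icc c d := ⟨htc.le, htd.le⟩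
    have hlt₁ : s t₁ < s t := lt_of_le_of_ne
      (hs_mono ht₁Icc htIcc (by simp only [ht₁]; linarith))
      (hsne t₁ ht₁mem (by simp only [ht₁]; intro h; nlinarith [hm0]))
    have hlt₂ : s t < s t₂ := lt_of_le_of_ne
      (hs_mono htIcc ht₂Icc (by simp only [ht₂]; linarith))
      (Ne.symm (hsne t₂ ht₂mem (by simp only [ht₂]; intro h; nlinarith [hm0])))
    rw [hG, mem_nhdsWithin]
    refine ⟨Ioo (s t₁) (s t₂), isOpen_Ioo, ⟨hlt₁, hlt₂⟩, ?_⟩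
    rintro x ⟨hxI, _, hxne⟩
    have hsub : Icc t₁ t₂ ⊆ Icc c d := Icc_subset_Icc ht₁Icc.1 ht₂Icc.2
    have hIVT := intermediate_value_Icc (ht₁mem.2) (hs_cont.mono hsub)
    obtain ⟨τ, hτmem, hτeq⟩ := hIVT (Ioo_subset_Icc_self hxI)
    have hτt : τ ≠ t := by
      intro h; apply hxne; rw [← hτeq, h]; rfl
    have hτV : τ ∈ V ∩ Ioo c d := hmem τ hτmem
    have : τ ∈ s ⁻¹' U := hVsub ⟨hτV.1, Ioo_subset_Icc_self hτV.2, hτt⟩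
    rw [← hτeq]; exact this
  -- F is the defining filter also for the composed slope
  have hGlimsup : mSlopeOn f (Icc a b) (s t)
      = Filter.limsup (fun τ => (f (s t) - f (s τ)).toENNReal' / edist (s t) (s τ)) F := by
    rw [mSlopeOn, ← hG, ← hmapeq, my_limsup_map]
  have hcomp : mSlopeOn (fun τ => f (s τ)) (Icc c d) t
      = Filter.limsup (fun τ =>
          ((f (s t) - f (s τ)).toENNReal' / edist (s t) (s τ)) *
            (edist (s t) (s τ) / edist t τ)) F := by
    rw [mSlopeOn]
    refine Filter.limsup_congr ?_
    filter_upwards [hFle hne] with τ hτ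
    have e1 : edist (s t) (s τ) ≠ 0 := by
      rw [← pos_iff_ne_zero, edist_pos]; exact (Ne.symm hτ)
    have e1top : edist (s t) (s τ) ≠ ⊤ := edist_ne_top _ _
    rw [div_eq_mul_inv, div_eq_mul_inv, div_eq_mul_inv, mul_assoc,
      ← mul_assoc (edist (s t) (s τ))⁻¹, ENNReal.inv_mul_cancel e1 e1top, one_mul]
  rw [hcomp, hGlimsup]
  have hL0 : ENNReal.ofReal |s'| ≠ 0 := by
    simp only [ne_eq, ENNReal.ofReal_eq_zero, not_le]
    exact abs_pos.2 hs'
  exact my_limsup_mul_tendsto hL0 ENNReal.ofReal_ne_top (hratio.mono_left hFle)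
end

section
/- Let f : X → ℝ∪{±∞} be a lower-semicontinuous function on a metric space X and let γ : [a,b] → X be a 1-Lipschitz curve such that f∘γ is non-increasing and finite-valued. Then for almost every t ∈ (a,b) the derivative (f∘γ)'(t) exists and satisfies |(f∘γ)'(t)| ≤ |∇f|(γ(t)). -/
open Filter Topology MeasureTheory Set NNReal ENNReal Pointwise

/-- Key pointwise estimate: if `f ∘ γ` is antitone and finite and has derivative `d` at an
interior point `t`, then `|d| ≤ |∇f|(γ t)`. -/
theorem statement1_aux {X : Type*} [MetricSpace X] (f : X → EReal)
    (a b : ℝ) (γ : ℝ → X) (hγ : LipschitzOnWith 1 γ (Icc a b))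
    (hmono : AntitoneOn (fun t => f (γ t)) (Icc a b))
    (hfin : ∀ t ∈ Icc a b, ∃ r : ℝ, f (γ t) = (r : EReal))
    {t d : ℝ} (ht : t ∈ Ioo a b)
    (hd : HasDerivAt (fun τ => (f (γ τ)).toReal) d t) :
    ENNReal.ofReal |d| ≤ mSlope f (γ t) := by
  set g : ℝ → ℝ := fun τ => (f (γ τ)).toReal with hg
  have htI : t ∈ Icc a b := Ioo_subset_Icc_self ht
  have hslope : Tendsto (slope g t) (𝓝[>] t) (𝓝 d) :=
    (hasDerivAt_iff_tendsto_slope.1 hd).mono_left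
      (nhdsWithin_mono _ (fun s hs => ne_of_gt hs))
  have hIoo : Ioo t b ∈ 𝓝[>] t := Ioo_mem_nhdsGT_of_mem ⟨le_rfl, ht.2⟩
  have hgle : ∀ s ∈ Ioo t b, g s ≤ g t := by
    intro s hs
    have hsI : s ∈ Icc a b := ⟨le_trans ht.1.le hs.1.le, hs.2.le⟩
    have := hmono htI hsI hs.1.le
    obtain ⟨rt, hrt⟩ := hfin t htI
    obtain ⟨rs, hrs⟩ := hfin s hsI
    simp only [hrt, hrs, EReal.coe_le_coe_iff] at this
    simp only [hg, hrt, hrs, EReal.toReal_coe]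
    exact this
  have hdle : d ≤ 0 := by
    refine le_of_tendsto hslope ?_
    filter_upwards [hIoo] with s hs
    have : g s - g t ≤ 0 := sub_nonpos.2 (hgle s hs)
    rw [slope_def_field]
    exact div_nonpos_iff.2 (Or.inr ⟨this, (sub_pos.2 hs.1).le⟩)
  by_cases hne : ∀ᶠ s in 𝓝[>] t, γ s ≠ γ t
  · -- main case
    have hcont : ContinuousAt γ t :=
      (hγ.continuousOn t htI).continuousAt (Icc_mem_nhds ht.1 ht.2)
    have hmap : Tendsto γ (𝓝[>] t) (𝓝[≠] (γ t)) := by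
      rw [tendsto_nhdsWithin_iff]
      exact ⟨hcont.tendsto.mono_left nhdsWithin_le_nhds, hne⟩
    set u : X → ℝ≥0∞ := fun x => (f (γ t) - f x).toENNReal' / edist (γ t) x with hu
    have hev : ∀ᶠ s in 𝓝[>] t, ENNReal.ofReal (-(slope g t s)) ≤ u (γ s) := by
      filter_upwards [hIoo, hne] with s hs hsne
      have hsI : s ∈ Icc a b := ⟨le_trans ht.1.le hs.1.le, hs.2.le⟩
      obtain ⟨rt, hrt⟩ := hfin t htI
      obtain ⟨rs, hrs⟩ := hfin s hsI
      have hsub : f (γ t) - f (γ s) = ((rt - rs : ℝ) : EReal) := by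
        rw [hrt, hrs, EReal.coe_sub]
      have hnum : (f (γ t) - f (γ s)).toENNReal' = ENNReal.ofReal (rt - rs) := by
        rw [hsub]
        simp only [EReal.toENNReal', EReal.coe_ne_top, if_false, EReal.toReal_coe]
      have hedist : edist (γ t) (γ s) ≤ ENNReal.ofReal (s - t) := by
        have := hγ htI hsI
        simp only [ENNReal.coe_one, one_mul] at this
        calc edist (γ t) (γ s) ≤ edist t s := this
          _ = ENNReal.ofReal (s - t) := by
              rw [edist_dist, Real.dist_eq, abs_of_neg (by linarith [hs.1] : t - s < 0)]
              ring_nf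
      have hstpos : (0 : ℝ) < s - t := sub_pos.2 hs.1
      have hsl : -(slope g t s) = (rt - rs) / (s - t) := by
        rw [slope_def_field]
        simp only [hg, hrt, hrs, EReal.toReal_coe]
        field_simp
        ring
      rw [hsl, ENNReal.ofReal_div_of_pos hstpos, hu]
      simp only [hnum]
      exact ENNReal.div_le_div_left hedist _
    have hlim : Tendsto (fun s => ENNReal.ofReal (-(slope g t s))) (𝓝[>] t)
        (𝓝 (ENNReal.ofReal (-d))) :=
      (ENNReal.continuous_ofReal.tendsto _).comp hslope.neg
    have h1 : ENNReal.ofReal (-d) =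
        Filter.limsup (fun s => ENNReal.ofReal (-(slope g t s))) (𝓝[>] t) :=
      hlim.limsup_eq.symm
    have h2 : Filter.limsup (fun s => ENNReal.ofReal (-(slope g t s))) (𝓝[>] t) ≤
        Filter.limsup (u ∘ γ) (𝓝[>] t) :=
      Filter.limsup_le_limsup hev
    have h3 : Filter.limsup (u ∘ γ) (𝓝[>] t) ≤ Filter.limsup u (𝓝[≠] (γ t)) := by
      rw [Filter.limsup_comp]
      exact Filter.limsup_le_limsup_of_le hmap
    rw [abs_of_nonpos hdle]
    calc ENNReal.ofReal (-d) ≤ Filter.limsup (u ∘ γ) (𝓝[>] t) := h1 ▸ h2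
      _ ≤ Filter.limsup u (𝓝[≠] (γ t)) := h3
      _ = mSlope f (γ t) := rfl
  · -- degenerate case: γ is frequently equal to γ t on the right, so d = 0
    rw [Filter.not_eventually] at hne
    have hfreq : ∃ᶠ s in 𝓝[>] t, γ s = γ t := hne.mono (fun s hs => not_not.1 hs)
    have hNB : (𝓝[>] t ⊓ 𝓟 {s | γ s = γ t}).NeBot := Filter.frequently_iff_neBot.1 hfreq
    have h1 : Tendsto (slope g t) (𝓝[>] t ⊓ 𝓟 {s | γ s = γ t}) (𝓝 d) :=
      hslope.mono_left inf_le_left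
    have h2 : Tendsto (slope g t) (𝓝[>] t ⊓ 𝓟 {s | γ s = γ t}) (𝓝 0) := by
      have : slope g t =ᶠ[𝓝[>] t ⊓ 𝓟 {s | γ s = γ t}] fun _ => (0 : ℝ) := by
        have hmem : {s | γ s = γ t} ∈ 𝓝[>] t ⊓ 𝓟 {s | γ s = γ t} :=
          mem_inf_of_right (mem_principal_self _)
        filter_upwards [hmem] with s hs
        simp [slope_def_field, hg, hs]
      exact tendsto_const_nhds.congr' this.symm
    have hd0 : d = 0 := tendsto_nhds_unique h1 h2
    simp [hd0]

/-- Upper bound on the speed of descent along a 1-Lipschitz curve. -/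
theorem statement1 {X : Type*} [MetricSpace X] (f : X → EReal)
    (hf : LowerSemicontinuous f)
    (a b : ℝ) (γ : ℝ → X) (hγ : LipschitzOnWith 1 γ (Icc a b))
    (hmono : AntitoneOn (fun t => f (γ t)) (Icc a b))
    (hfin : ∀ t ∈ Icc a b, ∃ r : ℝ, f (γ t) = (r : EReal)) :
    ∀ᵐ t ∂(volume.restrict (Ioo a b)), ∃ d : ℝ,
      HasDerivAt (fun τ => (f (γ τ)).toReal) d t ∧
      ENNReal.ofReal |d| ≤ mSlope f (γ t) := by
  rcases le_or_gt b a with hba | hab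
  · rw [Ioo_eq_empty (not_lt.2 hba)]
    simp
  set g : ℝ → ℝ := fun τ => (f (γ τ)).toReal with hg
  -- projection onto [a,b] and the extended function G
  set G : ℝ → ℝ := fun τ => g (max a (min τ b)) with hG
  have hproj : ∀ τ, max a (min τ b) ∈ Icc a b := fun τ =>
    ⟨le_max_left _ _, max_le hab.le (min_le_right _ _)⟩
  have hgmono : AntitoneOn g (Icc a b) := by
    intro s hs τ hτ hsτ
    obtain ⟨rs, hrs⟩ := hfin s hs
    obtain ⟨rτ, hrτ⟩ := hfin τ hτ
    have := hmono hs hτ hsτ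
    simp only [hrs, hrτ, EReal.coe_le_coe_iff] at this
    simp only [hg, hrs, hrτ, EReal.toReal_coe]
    exact this
  have hGanti : Antitone G := by
    intro s τ hsτ
    exact hgmono (hproj s) (hproj τ) (max_le_max le_rfl (min_le_min_right _ hsτ))
  have hMono : Monotone (fun τ => -G τ) := fun s τ h => neg_le_neg (hGanti h)
  have hdiff : ∀ᵐ τ, DifferentiableAt ℝ G τ := by
    filter_upwards [hMono.ae_differentiableAt] with τ hτ
    simpa using hτ.neg
  have hdiff' : ∀ᵐ τ ∂(volume.restrict (Ioo a b)), DifferentiableAt ℝ G τ :=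
    ae_restrict_of_ae hdiff
  have hmem : ∀ᵐ τ ∂(volume.restrict (Ioo a b)), τ ∈ Ioo a b :=
    ae_restrict_mem measurableSet_Ioo
  filter_upwards [hdiff', hmem] with t hdt htI
  have heq : g =ᶠ[𝓝 t] G := by
    filter_upwards [Ioo_mem_nhds htI.1 htI.2] with s hs
    have h1 : min s b = s := min_eq_left hs.2.le
    have h2 : max a s = s := max_eq_right hs.1.le
    simp only [hG, h1, h2]
  have hdg : HasDerivAt g (deriv G t) t :=
    hdt.hasDerivAt.congr_of_eventuallyEq heq
  exact ⟨deriv G t, hdg, statement1_aux f a b γ hγ hmono hfin htI hdg⟩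
end

section
/- Let f : X → ℝ∪{±∞} be a lower-semicontinuous function on a complete metric space X. Assume that for some point x with f(x) finite there are constants α < f(x) and r, K > 0 so that whenever a point u satisfies α < f(u) ≤ f(x) and d(u,x) ≤ K, the inequality |∇f|(u) ≥ r holds. If in addition f(x) − α < K·r, then the sublevel set [f ≤ α] := {u ∈ X : f(u) ≤ α} is nonempty and d(x, [f ≤ α]) ≤ r⁻¹(f(x) − α). -/
open Filter Topology MeasureTheory Set NNReal ENNReal Pointwise

theorem my_ekeland {X : Type*} [MetricSpace X] [CompleteSpace X]
    (g : X → ℝ) (hg : LowerSemicontinuous g) (B : ℝ) (hB : ∀ u, B ≤ g u)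
    (δ : ℝ) (hδ : 0 < δ) (x : X) :
    ∃ u : X, g u + δ * dist x u ≤ g x ∧ ∀ v : X, g u ≤ g v + δ * dist u v := by
  set F : X → Set X := fun w => {v | g v + δ * dist w v ≤ g w} with hF
  have hself : ∀ w, w ∈ F w := fun w => by simp [hF]
  have htrans : ∀ w v, v ∈ F w → ∀ z ∈ F v, z ∈ F w := by
    intro w v hv z hz
    have h1 : g v + δ * dist w v ≤ g w := hv
    have h2 : g z + δ * dist v z ≤ g v := hz
    have h3 : dist w z ≤ dist w v + dist v z := dist_triangle w v z
    have : g z + δ * dist w z ≤ g w := by nlinarith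
    exact this
  have hstep : ∀ (n : ℕ) (w : X), ∃ v, v ∈ F w ∧ g v < sInf (g '' F w) + (1/2)^n := by
    intro n w
    have hne : (g '' F w).Nonempty := ⟨g w, w, hself w, rfl⟩
    obtain ⟨a, ⟨v, hv, rfl⟩, ha⟩ :=
      exists_lt_of_csInf_lt hne (lt_add_of_pos_right _ (pow_pos (by norm_num : (0:ℝ) < 1/2) n))
    exact ⟨v, hv, ha⟩
  choose! step hstep1 hstep2 using hstep
  let u : ℕ → X := fun n => Nat.rec x (fun n w => step n w) n
  have hu0 : u 0 = x := rfl
  have husucc : ∀ n, u (n+1) = step n (u n) := fun _ => rfl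
  have hmem : ∀ n, u (n+1) ∈ F (u n) := fun n => hstep1 n (u n)
  have hnear : ∀ n, g (u (n+1)) < sInf (g '' F (u n)) + (1/2)^n := fun n => hstep2 n (u n)
  have hchain : ∀ n m, n ≤ m → u m ∈ F (u n) := by
    intro n m hnm
    induction m with
    | zero => have : n = 0 := Nat.le_zero.mp hnm; subst this; exact hself _
    | succ k ih =>
      rcases eq_or_lt_of_le hnm with h | h
      · rw [← h]; exact hself _
      · exact htrans _ _ (ih (Nat.lt_succ_iff.mp h)) _ (hmem k)
  have hanti : ∀ n m, n ≤ m → g (u m) + δ * dist (u n) (u m) ≤ g (u n) := fun n m h => hchain n m h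
  have hgmono : Antitone fun n => g (u n) := by
    intro n m h
    have := hanti n m h
    nlinarith [dist_nonneg (x := u n) (y := u m)]
  have hgbdd : BddBelow (Set.range fun n => g (u n)) := ⟨B, by rintro _ ⟨n, rfl⟩; exact hB _⟩
  have hgconv := tendsto_atTop_ciInf hgmono hgbdd
  have hgcauchy : CauchySeq fun n => g (u n) := hgconv.cauchySeq
  have hcauchy : CauchySeq u := by
    rw [Metric.cauchySeq_iff] at hgcauchy ⊢
    intro ε hε
    obtain ⟨N, hN⟩ := hgcauchy (δ * ε) (by positivity)
    refine ⟨N, fun m hm n hn => ?_⟩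
    have key : ∀ a b, N ≤ a → N ≤ b → a ≤ b → dist (u a) (u b) < ε := by
      intro a b ha hb hab
      have h1 := hanti a b hab
      have h2 := hN a ha b hb
      rw [Real.dist_eq, abs_lt] at h2
      have : δ * dist (u a) (u b) < δ * ε := by nlinarith [dist_comm (u a) (u b)]
      exact lt_of_mul_lt_mul_left this hδ.le
    rcases le_total m n with h | h
    · exact key m n hm hn h
    · rw [dist_comm]; exact key n m hn hm h
  obtain ⟨w, hw⟩ := cauchySeq_tendsto_of_complete hcauchy
  have hwF : ∀ n, g w + δ * dist (u n) w ≤ g (u n) := by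
    intro n
    by_contra hcon
    push_neg at hcon
    set c : ℝ := g w + δ * dist (u n) w - g (u n) with hc
    have hcpos : 0 < c := by simpa [hc] using sub_pos.mpr hcon
    have E1 : ∀ᶠ v in 𝓝 w, g w - c/2 < g v := hg w _ (by linarith)
    have E2 : ∀ᶠ v in 𝓝 w, δ * dist (u n) w - c/2 < δ * dist (u n) v := by
      have hcont : Tendsto (fun v => δ * dist (u n) v) (𝓝 w) (𝓝 (δ * dist (u n) w)) :=
        (tendsto_const_nhds.mul ((continuous_dist.comp (continuous_const.prodMk continuous_id)).tendsto w))
      exact hcont.eventually_const_lt (by linarith)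
    obtain ⟨m, hm1, hm2⟩ := ((hw.eventually (E1.and E2)).and (eventually_ge_atTop n)).exists
    have := hanti n m hm2
    obtain ⟨e1, e2⟩ := hm1
    nlinarith
  refine ⟨w, by simpa [hu0] using hwF 0, ?_⟩
  intro v
  by_contra hcon
  push_neg at hcon
  have hvF : ∀ n, v ∈ F (u n) := by
    intro n
    have h1 := hwF n
    have h2 : dist (u n) v ≤ dist (u n) w + dist w v := dist_triangle _ _ _
    show g v + δ * dist (u n) v ≤ g (u n)
    nlinarith
  have hineq : ∀ n : ℕ, g w ≤ g v + (1/2)^n := by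
    intro n
    have h1 : sInf (g '' F (u n)) ≤ g v := csInf_le ⟨B, by rintro _ ⟨z, _, rfl⟩; exact hB _⟩ ⟨v, hvF n, rfl⟩
    have h2 := hnear n
    have h3 := hwF (n+1)
    nlinarith [dist_nonneg (x := u (n+1)) (y := w)]
  have hlim : Tendsto (fun n : ℕ => g v + (1/2)^n) atTop (𝓝 (g v + 0)) :=
    tendsto_const_nhds.add (tendsto_pow_atTop_nhds_zero_of_lt_one (by norm_num) (by norm_num))
  have : g w ≤ g v + 0 := ge_of_tendsto' hlim fun n => hineq n
  nlinarith [dist_nonneg (x := w) (y := v)]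

/-- Error bound. -/
theorem statement2 {X : Type*} [MetricSpace X] [CompleteSpace X]
    (f : X → EReal) (hf : LowerSemicontinuous f)
    (x : X) (fx : ℝ) (hfx : f x = (fx : EReal))
    (α r K : ℝ) (hα : α < fx) (hr : 0 < r) (hK : 0 < K)
    (hslope : ∀ u : X, (α : EReal) < f u → f u ≤ f x → dist u x ≤ K →
      ENNReal.ofReal r ≤ mSlope f u)
    (hgap : fx - α < K * r) :
    {u : X | f u ≤ (α : EReal)}.Nonempty ∧
      Metric.infDist x {u : X | f u ≤ (α : EReal)} ≤ r⁻¹ * (fx - α) := by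
  set h : X → EReal := fun v => (f v ⊓ (fx : EReal)) ⊔ (α : EReal) with hh
  have hαfx : (α : EReal) ≤ (fx : EReal) := EReal.coe_le_coe_iff.mpr hα.le
  have hhlb : ∀ v, (α : EReal) ≤ h v := fun v => le_sup_right
  have hhub : ∀ v, h v ≤ (fx : EReal) := fun v => sup_le (inf_le_right) hαfx
  have hhnetop : ∀ v, h v ≠ ⊤ := fun v => ((hhub v).trans_lt (EReal.coe_lt_top fx)).ne
  have hhnebot : ∀ v, h v ≠ ⊥ := fun v => ((EReal.bot_lt_coe α).trans_le (hhlb v)).ne'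
  set g : X → ℝ := fun v => (h v).toReal with hgdef
  have hcoe : ∀ v, h v = ((g v : ℝ) : EReal) := fun v =>
    (EReal.coe_toReal (hhnetop v) (hhnebot v)).symm
  have hglb : ∀ v, α ≤ g v := fun v => by
    have := hhlb v; rw [hcoe v] at this; exact_mod_cast this
  have hgub : ∀ v, g v ≤ fx := fun v => by
    have := hhub v; rw [hcoe v] at this; exact_mod_cast this
  have hhlsc : LowerSemicontinuous h := by
    intro v0 y hy
    rcases lt_or_ge y (α : EReal) with hyα | hyα
    · exact Filter.Eventually.of_forall fun v => hyα.trans_le (hhlb v)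
    · have hy' : y < f v0 ⊓ (fx : EReal) := by
        rcases lt_sup_iff.mp hy with h1 | h1
        · exact h1
        · exact absurd h1 (not_lt.mpr hyα)
      have h1 : y < f v0 := hy'.trans_le inf_le_left
      have h2 : y < (fx : EReal) := hy'.trans_le inf_le_right
      filter_upwards [hf v0 y h1] with v hv
      exact (lt_inf_iff.mpr ⟨hv, h2⟩).trans_le le_sup_left
  have hglsc : LowerSemicontinuous g := by
    intro v0 y hy
    rcases lt_or_ge y α with hyα | hyα
    · exact Filter.Eventually.of_forall fun v => hyα.trans_le (hglb v)
    · have hy' : (y : EReal) < h v0 := by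
        rw [hcoe v0]; exact_mod_cast hy
      filter_upwards [hhlsc v0 (y : EReal) hy'] with v hv
      rw [hcoe v] at hv; exact_mod_cast hv
  have hgx : g x = fx := by
    have : h x = (fx : EReal) := by
      rw [hh]; simp only [hfx]; rw [inf_idem, sup_eq_left.mpr hαfx]
    rw [hgdef]; simp only [this, EReal.toReal_coe]
  have key : ∀ η : ℝ, 0 < η → ∃ u, f u ≤ (α : EReal) ∧ dist x u ≤ (fx - α)/r + η := by
    intro η hη
    have hεpos : 0 < fx - α := sub_pos.mpr hα
    set lam : ℝ := min K ((fx - α)/r + η) with hlam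
    have hlam_gt : (fx - α)/r < lam :=
      lt_min ((div_lt_iff₀ hr).mpr (by linarith)) (lt_add_of_pos_right _ hη)
    have hlam_pos : 0 < lam := lt_of_le_of_lt (div_nonneg hεpos.le hr.le) hlam_gt
    set δ : ℝ := (fx - α)/lam with hδdef
    have hδpos : 0 < δ := div_pos hεpos hlam_pos
    have hδlt : δ < r := by
      rw [hδdef, div_lt_iff₀ hlam_pos]
      calc fx - α = ((fx - α)/r) * r := by field_simp
      _ < r * lam := by rw [mul_comm]; exact (mul_lt_mul_iff_right₀ hr).mpr hlam_gt
    obtain ⟨u, hu1, hu2⟩ := my_ekeland g hglsc α hglb δ hδpos x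
    have hdxu : dist x u ≤ lam := by
      have h1 : δ * dist x u ≤ fx - α := by
        have := hglb u; rw [hgx] at hu1; linarith
      have h2 : δ * lam = fx - α := by rw [hδdef]; field_simp
      nlinarith
    by_cases hcase : f u ≤ (α : EReal)
    · exact ⟨u, hcase, hdxu.trans (min_le_right _ _)⟩
    exfalso
    push_neg at hcase
    have hfu_le : f u ≤ (fx : EReal) := by
      by_contra hgt
      push_neg at hgt
      have hhu : h u = (fx : EReal) := by
        rw [hh]; simp only []
        rw [inf_eq_right.mpr hgt.le, sup_eq_left.mpr hαfx]
      have hgu : g u = fx := by rw [hgdef]; simp only [hhu, EReal.toReal_coe]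
      have hdist0 : dist x u ≤ 0 := by rw [hgu, hgx] at hu1; nlinarith
      have : u = x := by
        rw [← dist_le_zero]; rwa [dist_comm]
      rw [this, hfx] at hgt; exact lt_irrefl _ hgt
    have hhu : h u = f u := by
      rw [hh]; simp only []
      rw [inf_eq_left.mpr hfu_le, sup_eq_left.mpr hcase.le]
    have hfu_eq : f u = ((g u : ℝ) : EReal) := by rw [← hhu, hcoe u]
    have hαgu : α < g u := by
      rw [hfu_eq] at hcase; exact_mod_cast hcase
    have hslope_u : ENNReal.ofReal r ≤ mSlope f u :=
      hslope u hcase (by rw [hfx]; exact hfu_le)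
        (by rw [dist_comm]; exact hdxu.trans (min_le_left _ _))
    set ρ : ℝ := (g u - α)/δ with hρ
    have hρpos : 0 < ρ := div_pos (by linarith) hδpos
    have hbnd : ∀ v, v ≠ u → dist u v < ρ →
        (f u - f v).toENNReal' / edist u v ≤ ENNReal.ofReal δ := by
      intro v hne hlt
      have hEuv : g u ≤ g v + δ * dist u v := hu2 v
      have hδρ : δ * ρ = g u - α := by rw [hρ]; field_simp
      have hgv_gt : α < g v := by nlinarith [mul_lt_mul_of_pos_left hlt hδpos]
      have hfv_gt : (α : EReal) < f v := by
        by_contra hle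
        push_neg at hle
        have : h v ≤ (α : EReal) :=
          sup_le ((inf_le_left).trans hle) le_rfl
        rw [hcoe v] at this
        exact absurd (EReal.coe_le_coe_iff.mp this) (not_le.mpr hgv_gt)
      rcases le_or_gt (f u) (f v) with hle | hlt2
      · have h0 : (f u - f v).toENNReal' = 0 := by
          rcases eq_or_ne (f v) ⊤ with htop | htop
          · rw [htop, EReal.sub_top, EReal.toENNReal',
              if_neg bot_ne_top, EReal.toReal_bot, ENNReal.ofReal_zero]
          · have hbot : f v ≠ ⊥ := ((EReal.bot_lt_coe α).trans hfv_gt).ne'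
            have hfv_eq : f v = (((f v).toReal : ℝ) : EReal) := (EReal.coe_toReal htop hbot).symm
            rw [hfu_eq, hfv_eq] at hle ⊢
            rw [← EReal.coe_sub, EReal.toENNReal', if_neg (EReal.coe_ne_top _),
              EReal.toReal_coe, ENNReal.ofReal_eq_zero]
            have : g u ≤ (f v).toReal := EReal.coe_le_coe_iff.mp hle
            linarith
        rw [h0, ENNReal.zero_div]
        exact zero_le
      · have hfv_le : f v ≤ (fx : EReal) := hlt2.le.trans hfu_le
        have hhv : h v = f v := by
          rw [hh]; simp only []
          rw [inf_eq_left.mpr hfv_le, sup_eq_left.mpr hfv_gt.le]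
        have hfv_eq : f v = ((g v : ℝ) : EReal) := by rw [← hhv, hcoe v]
        have hsub : f u - f v = (((g u - g v : ℝ)) : EReal) := by
          rw [hfu_eq, hfv_eq, ← EReal.coe_sub]
        have hnum : (f u - f v).toENNReal' = ENNReal.ofReal (g u - g v) := by
          rw [hsub, EReal.toENNReal', if_neg (EReal.coe_ne_top _), EReal.toReal_coe]
        have hdistpos : 0 < dist u v := dist_pos.mpr (by simpa [ne_comm] using hne)
        rw [hnum, edist_dist]
        have hstep1 : ENNReal.ofReal (g u - g v) ≤ ENNReal.ofReal (δ * dist u v) :=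
          ENNReal.ofReal_le_ofReal (by linarith)
        calc ENNReal.ofReal (g u - g v) / ENNReal.ofReal (dist u v)
            ≤ ENNReal.ofReal (δ * dist u v) / ENNReal.ofReal (dist u v) :=
              ENNReal.div_le_div_right hstep1 _
          _ = ENNReal.ofReal δ * (ENNReal.ofReal (dist u v) / ENNReal.ofReal (dist u v)) := by
              rw [ENNReal.ofReal_mul hδpos.le, mul_div_assoc]
          _ = ENNReal.ofReal δ := by
              rw [ENNReal.div_self (ENNReal.ofReal_pos.mpr hdistpos).ne'
                ENNReal.ofReal_ne_top, mul_one]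
    have hms : mSlope f u ≤ ENNReal.ofReal δ := by
      rw [mSlope]
      refine Filter.limsup_le_of_le (by isBoundedDefault) ?_
      have hball : ∀ᶠ v in 𝓝[≠] u, dist u v < ρ :=
        eventually_nhdsWithin_of_eventually_nhds
          (by
            have : Metric.ball u ρ ∈ 𝓝 u := Metric.ball_mem_nhds u hρpos
            filter_upwards [this] with v hv
            rw [dist_comm]; exact hv)
      filter_upwards [hball, eventually_mem_nhdsWithin] with v hv hvne
      exact hbnd v hvne hv
    have : ENNReal.ofReal r ≤ ENNReal.ofReal δ := hslope_u.trans hms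
    rw [ENNReal.ofReal_le_ofReal_iff hδpos.le] at this
    linarith
  obtain ⟨u1, hu1a, hu1b⟩ := key 1 one_pos
  refine ⟨⟨u1, hu1a⟩, ?_⟩
  rw [inv_mul_eq_div]
  refine le_of_forall_pos_le_add fun η hη => ?_
  obtain ⟨u, hua, hub⟩ := key η hη
  exact (Metric.infDist_le_dist_of_mem (show u ∈ {u : X | f u ≤ (α : EReal)} from hua)).trans hub
end

section
/- Let f : X → ℝ∪{±∞} be a lower-semicontinuous function on a metric space X and let γ : [a,b] → X be a curve of near-maximal slope for f. Suppose in addition that the function t ↦ |∇f|⁻(γ(t)) is integrable on [a,b] and that 1/(|∇f|⁻(γ(t))) is finite for almost every t ∈ [a,b]. Then there exists a reparametrization of γ that is a near-steepest descent curve for f. -/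
open Filter Topology MeasureTheory Set NNReal ENNReal Pointwise

private lemma aux_connect {F B : ℝ → ℝ} {p q : ℝ} (hpq : p ≤ q)
    (hF : ContinuousOn F (Icc p q)) (hB : ContinuousOn B (Icc p q))
    (h0 : F p ≤ B p)
    (step : ∀ t ∈ Ico p q, F t ≤ B t → ∃ u, t < u ∧ u ≤ q ∧ F u - F t ≤ B u - B t) :
    F q ≤ B q := by
  set S : Set ℝ := {t | t ∈ Icc p q ∧ F t ≤ B t} with hS
  have hpS : p ∈ S := ⟨⟨le_rfl, hpq⟩, h0⟩
  have hSne : S.Nonempty := ⟨p, hpS⟩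
  have hSbdd : BddAbove S := ⟨q, fun t ht => ht.1.2⟩
  have hclosed : IsClosed S := by
    have hSeq : S = Icc p q ∩ (fun t => F t - B t) ⁻¹' (Iic 0) := by
      ext t; simp only [hS, mem_setOf_eq, mem_inter_iff, mem_preimage, mem_Iic, sub_nonpos]
    rw [hSeq]
    exact ContinuousOn.preimage_isClosed_of_isClosed (hF.sub hB) isClosed_Icc isClosed_Iic
  have ht0 : sSup S ∈ S := hclosed.csSup_mem hSne hSbdd
  rcases eq_or_lt_of_le ht0.1.2 with h | h
  · rw [← h]; exact ht0.2
  · obtain ⟨u, hu1, hu2, hu3⟩ := step (sSup S) ⟨ht0.1.1, h⟩ ht0.2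
    have huS : u ∈ S := ⟨⟨ht0.1.1.trans hu1.le, hu2⟩, by linarith [ht0.2]⟩
    linarith [le_csSup hSbdd huS]

private lemma aux_cont {X : Type*} [MetricSpace X] {γ : ℝ → X} {a b : ℝ}
    (hAC : AbsContOn γ a b) : ContinuousOn γ (Icc a b) := by
  obtain ⟨m, hm, hdist⟩ := hAC
  set M : ℝ → ℝ := fun x => ∫ t in Icc a x, m t with hM
  have hMc : ContinuousOn M (Icc a b) := intervalIntegral.continuousOn_primitive_Icc hm
  have key : ∀ s ∈ Icc a b, ∀ t ∈ Icc a b, s ≤ t → dist (γ s) (γ t) ≤ M t - M s := by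
    intro s hs t ht hst
    have h1 : dist (γ s) (γ t) ≤ ∫ τ in s..t, m τ := hdist s t hs.1 hst ht.2
    have h2 : (∫ τ in s..t, m τ) = M t - M s := by
      rw [intervalIntegral.integral_of_le hst, hM]
      have hsub : Icc a s ∪ Ioc s t = Icc a t := Icc_union_Ioc_eq_Icc hs.1 hst
      have hdisj : Disjoint (Icc a s) (Ioc s t) :=
        Set.disjoint_left.mpr (fun x hx hx2 => absurd hx.2 (not_le.mpr hx2.1))
      have hint1 : IntegrableOn m (Icc a s) := hm.mono_set (Icc_subset_Icc le_rfl (hst.trans ht.2))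
      have hint2 : IntegrableOn m (Ioc s t) :=
        hm.mono_set fun x hx => ⟨hs.1.trans hx.1.le, hx.2.trans ht.2⟩
      have := MeasureTheory.setIntegral_union hdisj measurableSet_Ioc hint1 hint2
      rw [hsub] at this
      simp only [M]
      linarith [this]
    linarith
  intro x hx
  have hb : ∀ᶠ y in 𝓝[Icc a b] x, dist (γ y) (γ x) ≤ |M y - M x| := by
    filter_upwards [self_mem_nhdsWithin] with y hy
    rcases le_total y x with h | h
    · rw [abs_sub_comm]
      exact (key y hy x hx h).trans (le_abs_self _)
    · rw [dist_comm]
      exact (key x hx y hy h).trans (le_abs_self _)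
  have hMt : Tendsto (fun y => |M y - M x|) (𝓝[Icc a b] x) (𝓝 0) := by
    have : Tendsto (fun y => M y - M x) (𝓝[Icc a b] x) (𝓝 (M x - M x)) :=
      ((hMc x hx).sub tendsto_const_nhds)
    rw [sub_self] at this
    simpa using this.abs
  have : Tendsto (fun y => dist (γ y) (γ x)) (𝓝[Icc a b] x) (𝓝 0) :=
    squeeze_zero' (Eventually.of_forall fun _ => dist_nonneg) hb hMt
  exact tendsto_iff_dist_tendsto_zero.mpr this

private lemma aux_ftc {g : ℝ → ℝ} (hg : Integrable g) (c : ℝ) :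
    ∀ᵐ t, HasDerivAt (fun u => ∫ x in c..u, g x) (g t) t := by
  have hloc : LocallyIntegrable g volume := hg.locallyIntegrable
  filter_upwards [(IsUnifLocDoublingMeasure.vitaliFamily (volume : Measure ℝ)
    1).ae_tendsto_average_norm_sub hloc] with x hx
  rw [hasDerivAt_iff_tendsto_slope]
  set F : ℝ → ℝ := fun u => ∫ x in c..u, g x with hF
  have hsub : ∀ p q : ℝ, F q - F p = ∫ x in p..q, g x := fun p q =>
    intervalIntegral.integral_interval_sub_left hg.intervalIntegrable hg.intervalIntegrable
  have hbound : ∀ y z : ℝ, y < z → (x = y ∨ x = z) →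
      |(∫ t in Ioc y z, g t) - g x * (z - y)| ≤ (z - y) * ⨍ t in Icc y z, ‖g t - g x‖ := by
    intro y z hyz hxmem
    have hvol : (volume (Icc y z)).toReal = z - y := by
      rw [Real.volume_Icc, ENNReal.toReal_ofReal (by linarith)]
    have h1 : (∫ t in Ioc y z, g t) - g x * (z - y) = ∫ t in Ioc y z, (g t - g x) := by
      rw [MeasureTheory.integral_sub (hg.integrableOn)
        (integrableOn_const (by rw [Real.volume_Ioc]; exact ENNReal.ofReal_ne_top)),
        MeasureTheory.setIntegral_const, measureReal_def, Real.volume_Ioc,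
        ENNReal.toReal_ofReal (by linarith), smul_eq_mul]
      ring
    have hintn : IntegrableOn (fun t => ‖g t - g x‖) (Icc y z) := by
      exact (hg.integrableOn.sub (integrableOn_const
        (by rw [Real.volume_Icc]; exact ENNReal.ofReal_ne_top))).norm
    rw [h1, ← Real.norm_eq_abs]
    calc ‖∫ t in Ioc y z, (g t - g x)‖ ≤ ∫ t in Ioc y z, ‖g t - g x‖ :=
          MeasureTheory.norm_integral_le_integral_norm _
      _ ≤ ∫ t in Icc y z, ‖g t - g x‖ := by
          apply MeasureTheory.setIntegral_mono_set hintn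
          · exact Eventually.of_forall fun t => norm_nonneg _
          · exact HasSubset.Subset.eventuallyLE Ioc_subset_Icc_self
      _ = (z - y) * ⨍ t in Icc y z, ‖g t - g x‖ := by
          rw [MeasureTheory.setAverage_eq, smul_eq_mul, measureReal_def, hvol, ← mul_assoc,
            mul_inv_cancel₀ (by linarith), one_mul]
  have hright : Tendsto (slope F x) (𝓝[>] x) (𝓝 (g x)) := by
    rw [← tendsto_sub_nhds_zero_iff]
    have havg : Tendsto (fun y => ⨍ z in Icc x y, ‖g z - g x‖) (𝓝[>] x) (𝓝 0) :=
      hx.comp (Real.tendsto_Icc_vitaliFamily_right x)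
    apply squeeze_zero_norm' _ havg
    filter_upwards [self_mem_nhdsWithin] with y hy
    have hxy : x < y := hy
    have : slope F x y - g x = ((∫ t in Ioc x y, g t) - g x * (y - x)) / (y - x) := by
      have hFe : F y - F x = ∫ t in Ioc x y, g t := by
        rw [hsub x y, intervalIntegral.integral_of_le hxy.le]
      have hne : y - x ≠ 0 := sub_ne_zero.mpr (ne_of_gt hxy)
      rw [slope_def_field, ← hFe]
      field_simp
    rw [Real.norm_eq_abs, this, abs_div, abs_of_pos (by linarith : (0:ℝ) < y - x),
      div_le_iff₀ (by linarith)]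
    calc |(∫ t in Ioc x y, g t) - g x * (y - x)| ≤ (y - x) * ⨍ t in Icc x y, ‖g t - g x‖ :=
          hbound x y hxy (Or.inl rfl)
      _ = (⨍ t in Icc x y, ‖g t - g x‖) * (y - x) := mul_comm _ _
  have hleft : Tendsto (slope F x) (𝓝[<] x) (𝓝 (g x)) := by
    rw [← tendsto_sub_nhds_zero_iff]
    have havg : Tendsto (fun y => ⨍ z in Icc y x, ‖g z - g x‖) (𝓝[<] x) (𝓝 0) :=
      hx.comp (Real.tendsto_Icc_vitaliFamily_left x)
    apply squeeze_zero_norm' _ havg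
    filter_upwards [self_mem_nhdsWithin] with y hy
    have hxy : y < x := hy
    have : slope F x y - g x = ((∫ t in Ioc y x, g t) - g x * (x - y)) / (x - y) := by
      have hFe : F x - F y = ∫ t in Ioc y x, g t := by
        rw [hsub y x, intervalIntegral.integral_of_le hxy.le]
      have hne : x - y ≠ 0 := sub_ne_zero.mpr (ne_of_gt hxy)
      rw [slope_comm, slope_def_field, ← hFe]
      field_simp
    rw [Real.norm_eq_abs, this, abs_div, abs_of_pos (by linarith : (0:ℝ) < x - y),
      div_le_iff₀ (by linarith)]
    calc |(∫ t in Ioc y x, g t) - g x * (x - y)| ≤ (x - y) * ⨍ t in Icc y x, ‖g t - g x‖ :=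
          hbound y x hxy (Or.inr rfl)
      _ = (⨍ t in Icc y x, ‖g t - g x‖) * (x - y) := mul_comm _ _
  rw [← nhdsLT_sup_nhdsGT x]
  exact tendsto_sup.mpr ⟨hleft, hright⟩


set_option maxHeartbeats 2000000 in
/-- From curves of near-maximal slope to near-steepest descent curves. -/
theorem statement5 {X : Type*} [MetricSpace X] (f : X → EReal)
    (hf : LowerSemicontinuous f)
    (a b : ℝ) (hab : a ≤ b) (γ : ℝ → X)
    (hγ : NearMaximalSlopeCurve f a b γ)
    (hint : (∫⁻ t in Icc a b, limSlope f (γ t)) ≠ ⊤)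
    (hfin : ∀ᵐ t ∂(volume.restrict (Icc a b)), limSlope f (γ t) ≠ 0) :
    ∃ (c d : ℝ) (s : ℝ → ℝ), c ≤ d ∧ MonotoneOn s (Icc c d) ∧ AbsContOn s c d ∧
      s c = a ∧ s d = b ∧ NearSteepestDescentCurve f c d (fun τ => γ (s τ)) := by
  obtain ⟨hACγ, hmd, hanti, hdesc⟩ := hγ
  rcases eq_or_lt_of_le hab with rfl | hab'
  · refine ⟨0, 0, fun _ => a, le_rfl, monotoneOn_const, ⟨fun _ => 0, ?_, ?_⟩, rfl, rfl, ?_, ?_, ?_⟩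
    · exact (integrable_zero _ _ _).integrableOn
    · intro s t _ _ _; simp
    · apply LipschitzOnWith.of_dist_le_mul
      intro x _ y _
      simp only [dist_self, NNReal.coe_one, one_mul]
      exact dist_nonneg
    · intro x _ y _ _; exact le_rfl
    · have h0 : volume.restrict (Icc (0:ℝ) 0) = 0 := by
        rw [Measure.restrict_eq_zero]; simp
      rw [h0]; simp
  obtain ⟨mAC, hmACint, hmACdist⟩ := hACγ
  have hγcont : ContinuousOn γ (Icc a b) := aux_cont ⟨mAC, hmACint, hmACdist⟩
  have hre : volume.restrict (Icc a b) = volume.restrict (Ioo a b) :=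
    (Measure.restrict_congr_set Ioo_ae_eq_Icc).symm
  -- measurable version of the speed
  set proj : ℝ → ℝ := fun t => max a (min t b) with hproj
  have hprojc : Continuous proj := continuous_const.max (continuous_id.min continuous_const)
  have hprojmem : ∀ t, proj t ∈ Icc a b := fun t => ⟨le_max_left _ _, max_le hab (min_le_right _ _)⟩
  have hprojeq : ∀ t ∈ Icc a b, proj t = t := fun t ht => by
    rw [hproj]; simp only; rw [min_eq_left ht.2, max_eq_right ht.1]
  set γc : ℝ → X := fun t => γ (proj t) with hγcd
  have hγcc : Continuous γc := hγcont.comp_continuous hprojc hprojmem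
  set G : ℝ → ℝ≥0∞ := fun t =>
    limsup (fun n : ℕ => ENNReal.ofReal (dist (γc t) (γc (t + 1 / (n + 1))) / (1 / (n + 1)))) atTop
    with hG
  have hGmeas : Measurable G := by
    apply Measurable.limsup
    intro n
    exact ((hγcc.dist (hγcc.comp (continuous_id.add continuous_const))).div_const
      _).measurable.ennreal_ofReal
  have hGlim : ∀ t ∈ Ioo a b, ∀ m : ℝ, HasMetricDerivAt γ t m → G t = ENNReal.ofReal m := by
    intro t ht m hm
    set u : ℕ → ℝ := fun n => t + 1 / (n + 1) with hu
    have hu0 : Tendsto (fun n : ℕ => 1 / ((n : ℝ) + 1)) atTop (𝓝 0) :=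
      tendsto_one_div_add_atTop_nhds_zero_nat
    have hupos : ∀ n : ℕ, 0 < 1 / ((n : ℝ) + 1) := fun n => by positivity
    have hut : Tendsto u atTop (𝓝[≠] t) := by
      apply tendsto_nhdsWithin_of_tendsto_nhds_of_eventually_within
      · have : Tendsto u atTop (𝓝 (t + 0)) := tendsto_const_nhds.add hu0
        simpa using this
      · refine Eventually.of_forall fun n => ?_
        simp only [hu, mem_compl_iff, mem_singleton_iff]
        intro h
        nlinarith [hupos n, congrArg (fun z => z - t) h]
    have hseq : Tendsto (fun n => dist (γ (u n)) (γ t) / |u n - t|) atTop (𝓝 m) := hm.comp hut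
    have hev : ∀ᶠ n : ℕ in atTop, dist (γ (u n)) (γ t) / |u n - t|
        = dist (γc t) (γc (t + 1 / (n + 1))) / (1 / (n + 1)) := by
      have hevs : ∀ᶠ n : ℕ in atTop, 1 / ((n : ℝ) + 1) < b - t :=
        hu0.eventually_lt_const (by linarith [ht.2])
      filter_upwards [hevs] with n hn
      have h1 : u n ∈ Icc a b := ⟨by simp only [hu]; nlinarith [hupos n, ht.1],
        by simp only [hu]; nlinarith⟩
      simp only [hγcd]
      rw [hprojeq t (Ioo_subset_Icc_self ht), hprojeq _ h1, dist_comm]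
      congr 1
      show |u n - t| = 1 / ((n : ℝ) + 1)
      rw [hu]
      simp only [add_sub_cancel_left]
      exact abs_of_pos (hupos n)
    have hten : Tendsto (fun n : ℕ =>
        ENNReal.ofReal (dist (γc t) (γc (t + 1 / (n + 1))) / (1 / (n + 1)))) atTop
        (𝓝 (ENNReal.ofReal m)) :=
      (ENNReal.continuous_ofReal.tendsto m).comp (hseq.congr' hev)
    exact hten.limsup_eq
  have hgoodc : ∀ᵐ t ∂(volume.restrict (Icc a b)),
      G t = limSlope f (γ t) ∧ 0 < (G t).toReal ∧ G t ≠ ⊤ ∧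
      HasMetricDerivAt γ t ((G t).toReal) := by
    have hIoo : ∀ᵐ t ∂(volume.restrict (Icc a b)), t ∈ Ioo a b := by
      rw [hre]; exact ae_restrict_mem measurableSet_Ioo
    filter_upwards [hmd, hfin, hIoo] with t hmt hfint ht
    obtain ⟨m, hm1, hm2⟩ := hmt
    have hGt : G t = ENNReal.ofReal m := hGlim t ht m hm1
    have hmpos : 0 < m := by
      by_contra h
      push_neg at h
      rw [← hm2, ENNReal.ofReal_eq_zero.mpr h] at hfint
      exact hfint rfl
    have htr : (G t).toReal = m := by rw [hGt, ENNReal.toReal_ofReal hmpos.le]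
    exact ⟨by rw [hGt, hm2], by rw [htr]; exact hmpos,
      by rw [hGt]; exact ENNReal.ofReal_ne_top, by rw [htr]; exact hm1⟩
  set g0 : ℝ → ℝ := (Icc a b).indicator (fun t => (G t).toReal) with hg0
  have hg0meas : Measurable g0 := (hGmeas.ennreal_toReal).indicator measurableSet_Icc
  have hg0nn : ∀ t, 0 ≤ g0 t := fun t => by
    rw [hg0]
    by_cases h : t ∈ Icc a b
    · rw [indicator_of_mem h]; exact ENNReal.toReal_nonneg
    · rw [indicator_of_notMem h]
  have hgood : ∀ᵐ t ∂(volume.restrict (Icc a b)),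
      ENNReal.ofReal (g0 t) = limSlope f (γ t) ∧ 0 < g0 t ∧ HasMetricDerivAt γ t (g0 t) := by
    filter_upwards [hgoodc, ae_restrict_mem measurableSet_Icc] with t ht1 ht
    obtain ⟨h1, h2, h3, h4⟩ := ht1
    have he : g0 t = (G t).toReal := by rw [hg0, indicator_of_mem ht]
    refine ⟨?_, by rw [he]; exact h2, by rw [he]; exact h4⟩
    rw [he, ENNReal.ofReal_toReal h3, h1]
  have hlintIcc : ∫⁻ t in Icc a b, ENNReal.ofReal (g0 t) = ∫⁻ t in Icc a b, limSlope f (γ t) :=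
    lintegral_congr_ae (hgood.mono fun t ht => ht.1)
  have hlintfin : ∫⁻ t, ENNReal.ofReal (g0 t) ≠ ⊤ := by
    have heq : (fun t => ENNReal.ofReal (g0 t))
        = (Icc a b).indicator fun t => ENNReal.ofReal (g0 t) := by
      ext t
      by_cases h : t ∈ Icc a b
      · rw [indicator_of_mem h]
      · rw [indicator_of_notMem h, hg0, indicator_of_notMem h, ENNReal.ofReal_zero]
    rw [heq, lintegral_indicator measurableSet_Icc _, hlintIcc]
    exact hint
  have hg0int : Integrable g0 := by
    refine ⟨hg0meas.aestronglyMeasurable, ?_⟩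
    rw [hasFiniteIntegral_iff_ofReal (Eventually.of_forall hg0nn)]
    exact lt_top_iff_ne_top.mpr hlintfin
  -- the arclength function
  set σ : ℝ → ℝ := fun v => ∫ x in a..v, g0 x with hσd
  have hii : ∀ p q : ℝ, IntervalIntegrable g0 volume p q := fun p q => hg0int.intervalIntegrable
  have hσc : Continuous σ := intervalIntegral.continuous_primitive hii a
  have hσsub : ∀ p q : ℝ, σ q - σ p = ∫ x in p..q, g0 x := fun p q =>
    intervalIntegral.integral_interval_sub_left (hii a q) (hii a p)
  have hσmono : Monotone σ := by
    intro p q hpq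
    have h1 : σ q - σ p = ∫ x in Ioc p q, g0 x := by
      rw [hσsub, intervalIntegral.integral_of_le hpq]
    have h2 : 0 ≤ ∫ x in Ioc p q, g0 x :=
      setIntegral_nonneg measurableSet_Ioc fun x _ => hg0nn x
    linarith
  have hσa : σ a = 0 := by rw [hσd]; simp
  set L : ℝ := σ b with hLdef
  have hL0 : 0 ≤ L := by rw [hLdef, ← hσa]; exact hσmono hab
  have hσmem : ∀ t ∈ Icc a b, σ t ∈ Icc 0 L := fun t ht =>
    ⟨by rw [← hσa]; exact hσmono ht.1, by rw [hLdef]; exact hσmono ht.2⟩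
  have hσsm : StrictMonoOn σ (Icc a b) := by
    intro p hp q hq hpq
    have hsub2 : Ioc p q ⊆ Icc a b := fun x hx => ⟨hp.1.trans hx.1.le, hx.2.trans hq.2⟩
    have haepos : ∀ᵐ t ∂(volume.restrict (Ioc p q)), 0 < g0 t :=
      (hgood.mono fun t ht => ht.2.1).filter_mono (ae_mono (Measure.restrict_mono hsub2 le_rfl))
    have hNB : (volume.restrict (Ioc p q)) ≠ 0 := by
      intro hc
      have h1 : volume (Ioc p q) = 0 := by
        rw [← Measure.restrict_apply_univ (s := Ioc p q), hc]; simp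
      rw [Real.volume_Ioc] at h1
      rw [ENNReal.ofReal_eq_zero] at h1
      linarith
    have hlpos : 0 < ∫⁻ t in Ioc p q, ENNReal.ofReal (g0 t) := by
      rw [pos_iff_ne_zero]
      intro h0
      have hz : ∀ᵐ t ∂(volume.restrict (Ioc p q)), ENNReal.ofReal (g0 t) = 0 :=
        (lintegral_eq_zero_iff (hg0meas.ennreal_ofReal)).mp h0
      haveI : (ae (volume.restrict (Ioc p q))).NeBot := ae_neBot.mpr hNB
      obtain ⟨t, htz, htp⟩ := (hz.and haepos).exists
      rw [ENNReal.ofReal_eq_zero] at htz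
      linarith
    have hfin2 : ∫⁻ t in Ioc p q, ENNReal.ofReal (g0 t) ≠ ⊤ :=
      (lt_of_le_of_lt (setLIntegral_le_lintegral _ _) (lt_top_iff_ne_top.mpr hlintfin)).ne
    have heq : σ q - σ p = (∫⁻ t in Ioc p q, ENNReal.ofReal (g0 t)).toReal := by
      rw [hσsub, intervalIntegral.integral_of_le hpq.le,
        integral_eq_lintegral_of_nonneg_ae (Eventually.of_forall fun t => hg0nn t)
          hg0meas.aestronglyMeasurable.restrict]
    have hpos : 0 < σ q - σ p := by
      rw [heq]; exact ENNReal.toReal_pos hlpos.ne' hfin2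
    linarith
  -- key metric estimate
  have hkey : ∀ p ∈ Icc a b, ∀ q ∈ Icc a b, p ≤ q → dist (γ p) (γ q) ≤ σ q - σ p := by
    intro p hp q hq hpq
    rcases eq_or_lt_of_le hpq with rfl | hpq'
    · simp
    have hqp1 : (0:ℝ) < 2 * (q - p) + 1 := by linarith
    refine le_of_forall_pos_le_add ?_
    intro ε' hε'
    set ε : ℝ := ε' / (2 * (q - p) + 1) with hεdef
    have hεpos : 0 < ε := div_pos hε' hqp1
    have hgood' : ∀ᵐ t : ℝ, t ∈ Icc a b → (0 < g0 t ∧ HasMetricDerivAt γ t (g0 t)) := by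
      rw [← ae_restrict_iff' measurableSet_Icc]
      exact hgood.mono fun t ht => ⟨ht.2.1, ht.2.2⟩
    set P : ℝ → Prop := fun t =>
      (t ∈ Icc a b → (0 < g0 t ∧ HasMetricDerivAt γ t (g0 t))) ∧ HasDerivAt σ (g0 t) t with hP
    have hPae : ∀ᵐ t : ℝ, P t := hgood'.and (aux_ftc hg0int a)
    set Nm : Set ℝ := toMeasurable volume {t | ¬ P t} ∪ {a} with hNm
    have hNmnull : volume Nm = 0 :=
      measure_union_null (by rw [measure_toMeasurable]; exact ae_iff.mp hPae) (measure_singleton a)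
    have hNmP : ∀ t, t ∉ Nm → P t ∧ t ≠ a := fun t ht =>
      ⟨not_not.mp (fun h => ht (Or.inl (subset_toMeasurable _ _ h))),
        fun h => ht (Or.inr (mem_singleton_iff.mpr h))⟩
    set mB : ℝ → ℝ := (Icc a b).indicator (fun t => max (mAC t) 0) with hmB
    have hmBnn : ∀ t, 0 ≤ mB t := fun t => by
      rw [hmB]; exact indicator_nonneg (fun x _ => le_max_right _ _) t
    have hmBint : Integrable mB :=
      MeasureTheory.IntegrableOn.integrable_indicator (hmACint.pos_part) measurableSet_Icc
    have hwfin : ∫⁻ t, ENNReal.ofReal (mB t) ≠ ⊤ :=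
      ((hasFiniteIntegral_iff_ofReal (Eventually.of_forall hmBnn)).mp hmBint.2).ne
    obtain ⟨δ, hδ0, hδ⟩ := exists_pos_setLIntegral_lt_of_measure_lt (μ := volume) hwfin
      (ENNReal.ofReal_pos.mpr hεpos).ne'
    obtain ⟨U, hUN, hUopen, hUsmall⟩ := Set.exists_isOpen_lt_of_lt Nm δ
      (by rw [hNmnull]; exact hδ0)
    have hUlt : ∫⁻ t in U, ENNReal.ofReal (mB t) < ENNReal.ofReal ε := hδ U hUsmall
    set q2 : ℝ → ℝ := fun v => ∫ x in p..v, U.indicator mB x with hq2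
    have hq2int : Integrable (U.indicator mB) := hmBint.indicator hUopen.measurableSet
    have hq2ii : ∀ c d : ℝ, IntervalIntegrable (U.indicator mB) volume c d :=
      fun c d => hq2int.intervalIntegrable
    have hq2c : Continuous q2 := intervalIntegral.continuous_primitive hq2ii p
    have hq2sub : ∀ c d : ℝ, q2 d - q2 c = ∫ x in c..d, U.indicator mB x := fun c d =>
      intervalIntegral.integral_interval_sub_left (hq2ii p d) (hq2ii p c)
    have hq2nn : ∀ t, 0 ≤ U.indicator mB t := fun t =>
      indicator_nonneg (fun x _ => hmBnn x) t
    have hq2mono : Monotone q2 := by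
      intro c d hcd
      have h1 := hq2sub c d
      rw [intervalIntegral.integral_of_le hcd] at h1
      have h2 : 0 ≤ ∫ x in Ioc c d, U.indicator mB x :=
        setIntegral_nonneg measurableSet_Ioc fun x _ => hq2nn x
      linarith
    set B : ℝ → ℝ := fun t => (σ t - σ p) + 2 * ε * (t - p) + (q2 t - q2 p) with hB
    have hstep : ∀ t ∈ Ico p q, dist (γ p) (γ t) ≤ B t → ∃ v, t < v ∧ v ≤ q ∧
        dist (γ p) (γ v) - dist (γ p) (γ t) ≤ B v - B t := by
      intro t ht _
      have htab : t ∈ Icc a b := ⟨hp.1.trans ht.1, ht.2.le.trans hq.2⟩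
      by_cases htU : t ∈ U
      · obtain ⟨δ', hδ'0, hball⟩ := Metric.isOpen_iff.mp hUopen t htU
        set v := min q (t + δ' / 2) with hv
        have hv1 : t < v := lt_min ht.2 (by linarith)
        have hv2 : v ≤ q := min_le_left _ _
        refine ⟨v, hv1, hv2, ?_⟩
        have hioc : Ioc t v ⊆ U := by
          intro x hx
          apply hball
          rw [Metric.mem_ball, Real.dist_eq, abs_of_pos (by linarith [hx.1] : (0:ℝ) < x - t)]
          have hxv : x ≤ t + δ' / 2 := hx.2.trans (min_le_right _ _)
          linarith
        have hd1 : dist (γ p) (γ v) - dist (γ p) (γ t) ≤ dist (γ t) (γ v) := by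
          linarith [dist_triangle (γ p) (γ t) (γ v)]
        have hd2 : dist (γ t) (γ v) ≤ ∫ x in t..v, mAC x :=
          hmACdist t v htab.1 hv1.le (hv2.trans hq.2)
        have hsubv : Ioc t v ⊆ Icc a b := fun x hx =>
          ⟨htab.1.trans hx.1.le, hx.2.trans (hv2.trans hq.2)⟩
        have hd3 : (∫ x in t..v, mAC x) ≤ ∫ x in t..v, U.indicator mB x := by
          rw [intervalIntegral.integral_of_le hv1.le, intervalIntegral.integral_of_le hv1.le]
          apply setIntegral_mono_on (hmACint.mono_set hsubv) hq2int.integrableOn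
            measurableSet_Ioc
          intro x hx
          rw [indicator_of_mem (hioc hx), hmB, indicator_of_mem (hsubv hx)]
          exact le_max_left _ _
        have hσm2 : σ t ≤ σ v := hσmono hv1.le
        have hq2s : q2 v - q2 t = ∫ x in t..v, U.indicator mB x := hq2sub t v
        have hBd : B v - B t = (σ v - σ t) + 2 * ε * (v - t) + (q2 v - q2 t) := by
          rw [hB]; ring
        rw [hBd]
        have h2e : 0 ≤ 2 * ε * (v - t) := by
          apply mul_nonneg (by linarith) (by linarith)
        linarith
      · obtain ⟨⟨hPt1, hσt⟩, hta⟩ := hNmP t (fun h => htU (hUN h))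
        obtain ⟨hg0pos, hmdt⟩ := hPt1 htab
        have hmono2 : 𝓝[>] t ≤ 𝓝[≠] t :=
          nhdsWithin_mono t (fun x hx => ne_of_gt hx)
        have hev1 : ∀ᶠ v in 𝓝[>] t, dist (γ v) (γ t) / |v - t| < g0 t + ε :=
          (hmdt.eventually_lt_const (by linarith)).filter_mono hmono2
        have hev2 : ∀ᶠ v in 𝓝[>] t, g0 t - ε < slope σ t v :=
          ((hasDerivAt_iff_tendsto_slope.mp hσt).eventually_const_lt
            (by linarith)).filter_mono hmono2
        have hev3 : ∀ᶠ v in 𝓝[>] t, v ∈ Ioc t q :=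
          Ioc_mem_nhdsGT_of_mem ⟨le_refl t, ht.2⟩
        obtain ⟨v, hd, hsl, hmem⟩ := (hev1.and (hev2.and hev3)).exists
        refine ⟨v, hmem.1, hmem.2, ?_⟩
        have hvt : 0 < v - t := by linarith [hmem.1]
        have h5 : dist (γ t) (γ v) ≤ (g0 t + ε) * (v - t) := by
          rw [dist_comm]
          rw [abs_of_pos hvt] at hd
          calc dist (γ v) (γ t) = dist (γ v) (γ t) / (v - t) * (v - t) := by
                field_simp
            _ ≤ (g0 t + ε) * (v - t) := mul_le_mul_of_nonneg_right hd.le hvt.le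
        have h6 : (g0 t - ε) * (v - t) ≤ σ v - σ t := by
          rw [slope_def_field] at hsl
          calc (g0 t - ε) * (v - t) ≤ (σ v - σ t) / (v - t) * (v - t) :=
                mul_le_mul_of_nonneg_right hsl.le hvt.le
            _ = σ v - σ t := by field_simp
        have hq2m : q2 t ≤ q2 v := hq2mono (by linarith)
        have htri : dist (γ p) (γ v) - dist (γ p) (γ t) ≤ dist (γ t) (γ v) := by
          linarith [dist_triangle (γ p) (γ t) (γ v)]
        have hBd : B v - B t = (σ v - σ t) + 2 * ε * (v - t) + (q2 v - q2 t) := by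
          rw [hB]; ring
        rw [hBd]
        nlinarith [h5, h6, htri, hq2m]
    have hFc : ContinuousOn (fun t => dist (γ p) (γ t)) (Icc p q) :=
      (continuous_const.dist continuous_id).comp_continuousOn
        (hγcont.mono (Icc_subset_Icc hp.1 hq.2))
    have hBc : ContinuousOn B (Icc p q) := by
      apply Continuous.continuousOn
      exact ((hσc.sub continuous_const).add
        (continuous_const.mul (continuous_id.sub continuous_const))).add
        (hq2c.sub continuous_const)
    have hB0 : dist (γ p) (γ p) ≤ B p := by
      rw [dist_self, hB]; simp
    have hfinal := aux_connect hpq hFc hBc hB0 hstep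
    have hq2b : q2 q - q2 p ≤ ε := by
      have h1 : q2 q - q2 p = ∫ x in Ioc p q, U.indicator mB x := by
        rw [hq2sub, intervalIntegral.integral_of_le hpq]
      have h2 : (∫ x in Ioc p q, U.indicator mB x) = ∫ x in Ioc p q ∩ U, mB x :=
        setIntegral_indicator hUopen.measurableSet
      have h3 : (∫ x in Ioc p q ∩ U, mB x) ≤ ∫ x in U, mB x :=
        setIntegral_mono_set hmBint.integrableOn (Eventually.of_forall hmBnn)
          (HasSubset.Subset.eventuallyLE inter_subset_right)
      have h4 : (∫ x in U, mB x) = (∫⁻ x in U, ENNReal.ofReal (mB x)).toReal := by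
        rw [integral_eq_lintegral_of_nonneg_ae (Eventually.of_forall hmBnn)
          hmBint.aestronglyMeasurable.restrict]
      have hUfin : ∫⁻ x in U, ENNReal.ofReal (mB x) ≠ ⊤ :=
        (lt_of_le_of_lt (setLIntegral_le_lintegral _ _) (lt_top_iff_ne_top.mpr hwfin)).ne
      have h5 : (∫⁻ x in U, ENNReal.ofReal (mB x)).toReal ≤ ε := by
        have := (ENNReal.lt_ofReal_iff_toReal_lt hUfin).mp hUlt
        linarith
      linarith
    have hBq : B q = (σ q - σ p) + 2 * ε * (q - p) + (q2 q - q2 p) := by rw [hB]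
    have hεe : 2 * ε * (q - p) + ε = ε' := by
      rw [hεdef]
      field_simp
    linarith [hfinal, hq2b]
  -- the inverse reparametrization
  set Sf : ℝ → ℝ := fun v => sInf {t | t ∈ Icc a b ∧ v ≤ σ t} with hSfd
  have hAcl : ∀ v : ℝ, IsClosed {t | t ∈ Icc a b ∧ v ≤ σ t} := fun v => by
    have hseq : {t | t ∈ Icc a b ∧ v ≤ σ t} = Icc a b ∩ σ ⁻¹' (Ici v) := rfl
    rw [hseq]; exact isClosed_Icc.inter (isClosed_Ici.preimage hσc)
  have hAne : ∀ v ∈ Icc 0 L, b ∈ {t | t ∈ Icc a b ∧ v ≤ σ t} := fun v hv =>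
    ⟨right_mem_Icc.mpr hab, hv.2⟩
  have hAbdd : ∀ v : ℝ, BddBelow {t | t ∈ Icc a b ∧ v ≤ σ t} := fun v =>
    ⟨a, fun t ht => ht.1.1⟩
  have hSfmem : ∀ v ∈ Icc 0 L, Sf v ∈ Icc a b ∧ v ≤ σ (Sf v) := fun v hv =>
    (hAcl v).csInf_mem ⟨b, hAne v hv⟩ (hAbdd v)
  have hSfab : ∀ v ∈ Icc 0 L, Sf v ∈ Icc a b := fun v hv => (hSfmem v hv).1
  have hσSf : ∀ v ∈ Icc 0 L, σ (Sf v) = v := by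
    intro v hv
    rcases eq_or_lt_of_le (hSfmem v hv).2 with h | h
    · exact h.symm
    exfalso
    have hasv : a ≤ Sf v := (hSfab v hv).1
    have hiv : v ∈ Icc (σ a) (σ (Sf v)) := ⟨by rw [hσa]; exact hv.1, (hSfmem v hv).2⟩
    obtain ⟨t, htmem, htσ⟩ := intermediate_value_Icc hasv hσc.continuousOn hiv
    have htA : t ∈ {t | t ∈ Icc a b ∧ v ≤ σ t} :=
      ⟨⟨htmem.1, htmem.2.trans (hSfab v hv).2⟩, htσ.ge⟩
    have hle := csInf_le (hAbdd v) htA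
    have hσle : σ (Sf v) ≤ σ t := hσmono hle
    rw [htσ] at hσle
    exact absurd hσle (not_le.mpr h)
  have hSfσ : ∀ t ∈ Icc a b, Sf (σ t) = t := by
    intro t ht
    have h1 : σ t ∈ Icc 0 L := hσmem t ht
    have h2 : Sf (σ t) ≤ t := csInf_le (hAbdd _) ⟨ht, le_rfl⟩
    have h3 : σ (Sf (σ t)) = σ t := hσSf _ h1
    exact hσsm.injOn (hSfab _ h1) ht h3
  have hSfmono : MonotoneOn Sf (Icc 0 L) := by
    intro v hv u hu hvu
    exact csInf_le_csInf (hAbdd v) ⟨b, hAne u hu⟩ (fun t ht => ⟨ht.1, hvu.trans ht.2⟩)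
  have hSf0 : Sf 0 = a := by
    have := hSfσ a (left_mem_Icc.mpr hab)
    rw [hσa] at this
    exact this
  have hSfL : Sf L = b := hSfσ b (right_mem_Icc.mpr hab)
  have hSfle : ∀ v ∈ Icc 0 L, ∀ u ∈ Icc 0 L, (Sf v ≤ Sf u ↔ v ≤ u) := by
    intro v hv u hu
    constructor
    · intro h
      have h2 := hσmono h
      rw [hσSf v hv, hσSf u hu] at h2
      exact h2
    · exact fun h => hSfmono hv hu h
  have hSfcont : ∀ τ ∈ Ioo 0 L, ContinuousAt Sf τ := by
    intro τ hτ
    have hτm : τ ∈ Icc 0 L := Ioo_subset_Icc_self hτ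
    have ht0 : Sf τ ∈ Icc a b := hSfab τ hτm
    have hta : a < Sf τ := by
      rcases eq_or_lt_of_le ht0.1 with h | h
      · exfalso
        have h2 := hσSf τ hτm
        rw [← h, hσa] at h2
        exact absurd h2.symm (ne_of_gt hτ.1)
      · exact h
    have htb : Sf τ < b := by
      rcases eq_or_lt_of_le ht0.2 with h | h
      · exfalso
        have h2 := hσSf τ hτm
        rw [h] at h2
        rw [← hLdef] at h2
        exact absurd h2 (ne_of_gt hτ.2)
      · exact h
    rw [Metric.continuousAt_iff]
    intro ε hε
    set t₁ := max a (Sf τ - ε / 2) with ht₁d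
    set t₂ := min b (Sf τ + ε / 2) with ht₂d
    have ht₁ : t₁ ∈ Icc a b := ⟨le_max_left _ _, max_le hab (by linarith [ht0.2])⟩
    have ht₂ : t₂ ∈ Icc a b := ⟨le_min hab (by linarith [ht0.1]), min_le_left _ _⟩
    have ht₁lt : t₁ < Sf τ := max_lt hta (by linarith)
    have ht₂gt : Sf τ < t₂ := lt_min htb (by linarith)
    have hσ₁ : σ t₁ < τ := by
      have h2 := hσsm ht₁ ht0 ht₁lt
      rw [hσSf τ hτm] at h2
      exact h2
    have hσ₂ : τ < σ t₂ := by
      have h2 := hσsm ht0 ht₂ ht₂gt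
      rw [hσSf τ hτm] at h2
      exact h2
    refine ⟨min (τ - σ t₁) (σ t₂ - τ), lt_min (by linarith) (by linarith), ?_⟩
    intro v hv
    rw [Real.dist_eq] at hv
    have hv' := abs_lt.mp hv
    have hul : σ t₁ < v := by
      have hm := min_le_left (τ - σ t₁) (σ t₂ - τ)
      linarith [hv'.1]
    have huu : v < σ t₂ := by
      have hm := min_le_right (τ - σ t₁) (σ t₂ - τ)
      linarith [hv'.2]
    have h0t₁ : 0 ≤ σ t₁ := by rw [← hσa]; exact hσmono ht₁.1
    have ht₂L : σ t₂ ≤ L := hσmono ht₂.2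
    have humem : v ∈ Icc 0 L := ⟨(lt_of_le_of_lt h0t₁ hul).le, (lt_of_lt_of_le huu ht₂L).le⟩
    have hl : t₁ ≤ Sf v := by
      have h1 : Sf (σ t₁) ≤ Sf v := hSfmono (hσmem t₁ ht₁) humem hul.le
      rw [hSfσ t₁ ht₁] at h1
      exact h1
    have hr : Sf v ≤ t₂ := by
      have h1 : Sf v ≤ Sf (σ t₂) := hSfmono humem (hσmem t₂ ht₂) huu.le
      rw [hSfσ t₂ ht₂] at h1
      exact h1
    rw [Real.dist_eq, abs_lt]
    constructor
    · have hm : Sf τ - ε / 2 ≤ t₁ := le_max_right _ _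
      linarith
    · have hm : t₂ ≤ Sf τ + ε / 2 := min_le_right _ _
      linarith
  have hre2 : volume.restrict (Icc 0 L) = volume.restrict (Ioo 0 L) :=
    (Measure.restrict_congr_set Ioo_ae_eq_Icc).symm
  have hSfaem : AEMeasurable Sf (volume.restrict (Ioo 0 L)) :=
    ContinuousOn.aemeasurable (fun τ hτ => (hSfcont τ hτ).continuousWithinAt) measurableSet_Ioo
  have hfinm : IsFiniteMeasure (Measure.map Sf (volume.restrict (Ioo 0 L))) := by
    constructor
    rw [Measure.map_apply_of_aemeasurable hSfaem MeasurableSet.univ, preimage_univ,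
      Measure.restrict_apply_univ, Real.volume_Ioo]
    exact ENNReal.ofReal_lt_top
  have hmap : Measure.map Sf (volume.restrict (Ioo 0 L)) =
      (volume.restrict (Icc a b)).withDensity (fun t => ENNReal.ofReal (g0 t)) := by
    haveI := hfinm
    apply Measure.ext_of_Iic
    intro x
    rw [Measure.map_apply_of_aemeasurable hSfaem measurableSet_Iic,
      Measure.restrict_apply' measurableSet_Ioo,
      withDensity_apply _ measurableSet_Iic, Measure.restrict_restrict measurableSet_Iic]
    rcases lt_or_ge x a with hxa | hxa
    · have h1 : Sf ⁻¹' Iic x ∩ Ioo 0 L = ∅ := by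
        apply eq_empty_iff_forall_notMem.mpr
        rintro τ ⟨hτ1, hτ2⟩
        have h3 := (hSfab τ (Ioo_subset_Icc_self hτ2)).1
        have h4 : Sf τ ≤ x := hτ1
        linarith
      have h2 : Iic x ∩ Icc a b = ∅ := by
        apply eq_empty_iff_forall_notMem.mpr
        rintro t ⟨ht1, ht2, ht3⟩
        have h4 : t ≤ x := ht1
        linarith
      rw [h1, h2]
      simp
    rcases le_or_gt x b with hxb | hxb
    · have hxm : x ∈ Icc a b := ⟨hxa, hxb⟩
      have hc : σ x ∈ Icc 0 L := hσmem x hxm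
      have h1 : Sf ⁻¹' Iic x ∩ Ioo 0 L = Iic (σ x) ∩ Ioo 0 L := by
        ext τ
        simp only [mem_inter_iff, mem_preimage, mem_Iic]
        constructor
        · rintro ⟨h1, h2⟩
          refine ⟨?_, h2⟩
          have h3 := hσmono h1
          rw [hσSf τ (Ioo_subset_Icc_self h2)] at h3
          exact h3
        · rintro ⟨h1, h2⟩
          refine ⟨?_, h2⟩
          have h3 := hSfmono (Ioo_subset_Icc_self h2) hc h1
          rw [hSfσ x hxm] at h3
          exact h3
      rw [h1]
      have h2 : volume (Iic (σ x) ∩ Ioo 0 L) = ENNReal.ofReal (σ x) := by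
        have hsub1 : Iic (σ x) ∩ Ioo 0 L ⊆ Ioc 0 (σ x) := by
          rintro τ ⟨ha1, ha2, _⟩
          exact ⟨ha2, ha1⟩
        have hsub2 : Ioo 0 (σ x) ⊆ Iic (σ x) ∩ Ioo 0 L := by
          rintro τ ⟨ha1, ha2⟩
          exact ⟨ha2.le, ha1, lt_of_lt_of_le ha2 hc.2⟩
        have he1 : volume (Ioc 0 (σ x)) = ENNReal.ofReal (σ x) := by
          rw [Real.volume_Ioc, sub_zero]
        have he2 : volume (Ioo 0 (σ x)) = ENNReal.ofReal (σ x) := by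
          rw [Real.volume_Ioo, sub_zero]
        exact le_antisymm (he1 ▸ measure_mono hsub1) (he2 ▸ measure_mono hsub2)
      rw [h2]
      have h3 : Iic x ∩ Icc a b = Icc a x := by
        ext t
        simp only [mem_inter_iff, mem_Iic, mem_Icc]
        constructor
        · rintro ⟨h1, h2, _⟩
          exact ⟨h2, h1⟩
        · rintro ⟨h1, h2⟩
          exact ⟨h2, h1, h2.trans hxb⟩
      rw [h3, ← MeasureTheory.ofReal_integral_eq_lintegral_ofReal hg0int.integrableOn
        (Eventually.of_forall hg0nn)]
      congr 1
      rw [MeasureTheory.integral_Icc_eq_integral_Ioc, ← intervalIntegral.integral_of_le hxa]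
    · have h1 : Sf ⁻¹' Iic x ∩ Ioo 0 L = Ioo 0 L :=
        inter_eq_right.mpr
          (fun τ hτ => le_trans (hSfab τ (Ioo_subset_Icc_self hτ)).2 hxb.le)
      have h3 : Iic x ∩ Icc a b = Icc a b :=
        inter_eq_right.mpr (fun t ht => ht.2.trans hxb.le)
      rw [h1, h3, Real.volume_Ioo, sub_zero,
        ← MeasureTheory.ofReal_integral_eq_lintegral_ofReal hg0int.integrableOn
          (Eventually.of_forall hg0nn)]
      congr 1
      rw [MeasureTheory.integral_Icc_eq_integral_Ioc, ← intervalIntegral.integral_of_le hab]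
  have htrans : ∀ P : ℝ → Prop, (∀ᵐ t ∂(volume.restrict (Icc a b)), P t) →
      (∀ᵐ τ ∂(volume.restrict (Ioo 0 L)), P (Sf τ)) := by
    intro P hP
    rw [ae_iff] at hP ⊢
    set N := toMeasurable (volume.restrict (Icc a b)) {t | ¬ P t} with hN
    have hNmeas : MeasurableSet N := measurableSet_toMeasurable _ _
    have hNnull : volume.restrict (Icc a b) N = 0 := by
      rw [hN, measure_toMeasurable]
      exact hP
    have hsub3 : {τ | ¬ P (Sf τ)} ⊆ Sf ⁻¹' N := fun τ hτ => subset_toMeasurable _ _ hτ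
    refine measure_mono_null hsub3 ?_
    have h1 : (volume.restrict (Ioo 0 L)) (Sf ⁻¹' N)
        = Measure.map Sf (volume.restrict (Ioo 0 L)) N :=
      (Measure.map_apply_of_aemeasurable hSfaem hNmeas).symm
    rw [h1, hmap, withDensity_apply _ hNmeas, Measure.restrict_eq_zero.mpr hNnull,
      lintegral_zero_measure]
  -- change of variables for the integral of 1/g0 ∘ Sf
  set w2 : ℝ → ℝ≥0∞ := fun t => if g0 t = 0 then 0 else (ENNReal.ofReal (g0 t))⁻¹ with hw2
  have hw2meas : Measurable w2 := by
    apply Measurable.ite (hg0meas (measurableSet_singleton 0)) measurable_const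
    exact (hg0meas.ennreal_ofReal).inv
  set mm : ℝ → ℝ := fun τ => if g0 (Sf τ) = 0 then 0 else (g0 (Sf τ))⁻¹ with hmmd
  have hmmnn : ∀ τ, 0 ≤ mm τ := fun τ => by
    rw [hmmd]
    dsimp only
    split
    · exact le_rfl
    · exact inv_nonneg.mpr (hg0nn _)
  have hmmw2 : ∀ τ, ENNReal.ofReal (mm τ) = w2 (Sf τ) := by
    intro τ
    rw [hmmd, hw2]
    dsimp only
    by_cases h : g0 (Sf τ) = 0
    · rw [if_pos h, if_pos h, ENNReal.ofReal_zero]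
    · rw [if_neg h, if_neg h,
        ENNReal.ofReal_inv_of_pos (lt_of_le_of_ne (hg0nn _) (Ne.symm h))]
  have hBcalc : ∀ v ∈ Icc 0 L, ∀ u ∈ Icc 0 L, v ≤ u →
      ∫⁻ τ in Ioc v u, ENNReal.ofReal (mm τ) = ENNReal.ofReal (Sf u - Sf v) := by
    intro v hv u hu hvu
    have hs1 : (Ioc v u : Set ℝ) =ᵐ[volume] ((Ioc v u ∩ Ioo 0 L : Set ℝ)) := by
      rw [ae_eq_set]
      constructor
      · refine measure_mono_null (fun τ hτ => ?_) (measure_singleton L)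
        obtain ⟨h1, h2⟩ := hτ
        simp only [mem_inter_iff, not_and] at h2
        have h3 := h2 h1
        simp only [mem_Ioo, not_and, not_lt] at h3
        have h4 : 0 < τ := lt_of_le_of_lt hv.1 h1.1
        have h5 := h3 h4
        have h6 : τ ≤ L := h1.2.trans hu.2
        simp only [mem_singleton_iff]
        linarith
      · have hemp : (Ioc v u ∩ Ioo 0 L : Set ℝ) \ Ioc v u = ∅ := by
          apply eq_empty_iff_forall_notMem.mpr
          rintro τ ⟨⟨ha1, _⟩, ha2⟩
          exact ha2 ha1
        rw [hemp]
        exact measure_empty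
    calc ∫⁻ τ in Ioc v u, ENNReal.ofReal (mm τ)
        = ∫⁻ τ in Ioc v u, w2 (Sf τ) := lintegral_congr fun τ => hmmw2 τ
      _ = ∫⁻ τ in Ioc v u ∩ Ioo 0 L, w2 (Sf τ) := by
          rw [Measure.restrict_congr_set hs1]
      _ = ∫⁻ τ in Ioc v u, w2 (Sf τ) ∂(volume.restrict (Ioo 0 L)) := by
          rw [Measure.restrict_restrict measurableSet_Ioc]
      _ = ∫⁻ τ, (Ioc v u).indicator (fun τ => w2 (Sf τ)) τ ∂(volume.restrict (Ioo 0 L)) := by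
          rw [lintegral_indicator measurableSet_Ioc]
      _ = ∫⁻ τ, ((Ioc (Sf v) (Sf u)).indicator w2) (Sf τ) ∂(volume.restrict (Ioo 0 L)) := by
          apply lintegral_congr_ae
          filter_upwards [ae_restrict_mem measurableSet_Ioo] with τ hτ
          have hτm : τ ∈ Icc 0 L := Ioo_subset_Icc_self hτ
          by_cases h : τ ∈ Ioc v u
          · have hmem2 : Sf τ ∈ Ioc (Sf v) (Sf u) := by
              constructor
              · rcases lt_or_ge (Sf v) (Sf τ) with hlt | hle
                · exact hlt
                · exfalso
                  have h2 := (hSfle τ hτm v hv).mp hle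
                  exact absurd h2 (not_le.mpr h.1)
              · exact (hSfle τ hτm u hu).mpr h.2
            rw [indicator_of_mem h, indicator_of_mem hmem2]
          · have hmem2 : Sf τ ∉ Ioc (Sf v) (Sf u) := by
              intro hc
              apply h
              constructor
              · rcases lt_or_ge v τ with hlt | hle
                · exact hlt
                · exfalso
                  have h2 := hSfmono hτm hv hle
                  exact absurd h2 (not_le.mpr hc.1)
              · exact (hSfle τ hτm u hu).mp hc.2
            rw [indicator_of_notMem h, indicator_of_notMem hmem2]
      _ = ∫⁻ t, ((Ioc (Sf v) (Sf u)).indicator w2) t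
            ∂(Measure.map Sf (volume.restrict (Ioo 0 L))) :=
          (lintegral_map' (hw2meas.indicator measurableSet_Ioc).aemeasurable hSfaem).symm
      _ = ∫⁻ t, ((Ioc (Sf v) (Sf u)).indicator w2) t
            ∂((volume.restrict (Icc a b)).withDensity fun t => ENNReal.ofReal (g0 t)) := by
          rw [hmap]
      _ = ∫⁻ t, ENNReal.ofReal (g0 t) * ((Ioc (Sf v) (Sf u)).indicator w2) t
            ∂(volume.restrict (Icc a b)) := by
          rw [lintegral_withDensity_eq_lintegral_mul _ (hg0meas.ennreal_ofReal)
            (hw2meas.indicator measurableSet_Ioc)]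
          rfl
      _ = ∫⁻ t in Ioc (Sf v) (Sf u), ENNReal.ofReal (g0 t) * w2 t
            ∂(volume.restrict (Icc a b)) := by
          rw [← lintegral_indicator measurableSet_Ioc]
          apply lintegral_congr fun t => ?_
          by_cases h : t ∈ Ioc (Sf v) (Sf u)
          · rw [indicator_of_mem h, indicator_of_mem h]
          · rw [indicator_of_notMem h, indicator_of_notMem h, mul_zero]
      _ = ∫⁻ _ in Ioc (Sf v) (Sf u), 1 ∂(volume.restrict (Icc a b)) := by
          apply lintegral_congr_ae
          have hpos2 : ∀ᵐ t ∂((volume.restrict (Icc a b)).restrict (Ioc (Sf v) (Sf u))),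
              0 < g0 t :=
            (hgood.mono fun t ht => ht.2.1).filter_mono (ae_mono Measure.restrict_le_self)
          filter_upwards [hpos2] with t ht
          rw [hw2]
          dsimp only
          rw [if_neg (ne_of_gt ht)]
          rw [ENNReal.mul_inv_cancel (ENNReal.ofReal_pos.mpr ht).ne' ENNReal.ofReal_ne_top]
      _ = ENNReal.ofReal (Sf u - Sf v) := by
          rw [setLIntegral_one, Measure.restrict_apply measurableSet_Ioc]
          have hss : Ioc (Sf v) (Sf u) ∩ Icc a b = Ioc (Sf v) (Sf u) :=
            inter_eq_left.mpr (fun t ht =>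
              ⟨(hSfab v hv).1.trans ht.1.le, ht.2.trans (hSfab u hu).2⟩)
          rw [hss, Real.volume_Ioc]
  have hmmaem : AEMeasurable mm (volume.restrict (Icc 0 L)) := by
    rw [hre2]
    have hrw : Measurable (fun t : ℝ => if g0 t = 0 then 0 else (g0 t)⁻¹) :=
      Measurable.ite (hg0meas (measurableSet_singleton 0)) measurable_const hg0meas.inv
    exact hrw.comp_aemeasurable hSfaem
  have hmmlint : ∀ v ∈ Icc 0 L, ∀ u ∈ Icc 0 L, v ≤ u →
      ∫ τ in v..u, mm τ = Sf u - Sf v := by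
    intro v hv u hu hvu
    have hle2 : volume.restrict (Ioc v u) ≤ volume.restrict (Icc 0 L) :=
      Measure.restrict_mono
        (fun x hx => mem_Icc.mpr ⟨hv.1.trans hx.1.le, hx.2.trans hu.2⟩) le_rfl
    have hmeas2 : AEStronglyMeasurable mm (volume.restrict (Ioc v u)) :=
      (hmmaem.mono_measure hle2).aestronglyMeasurable
    rw [intervalIntegral.integral_of_le hvu,
      integral_eq_lintegral_of_nonneg_ae (Eventually.of_forall hmmnn) hmeas2,
      hBcalc v hv u hu hvu, ENNReal.toReal_ofReal]
    have h2 := hSfmono hv hu hvu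
    linarith
  have hmmint : IntegrableOn mm (Icc 0 L) := by
    refine ⟨hmmaem.aestronglyMeasurable, ?_⟩
    rw [hasFiniteIntegral_iff_ofReal (Eventually.of_forall hmmnn)]
    have h1 : ∫⁻ τ in Icc 0 L, ENNReal.ofReal (mm τ)
        = ∫⁻ τ in Ioc 0 L, ENNReal.ofReal (mm τ) := by
      rw [Measure.restrict_congr_set Ioc_ae_eq_Icc]
    rw [h1, hBcalc 0 (left_mem_Icc.mpr hL0) L (right_mem_Icc.mpr hL0) hL0]
    exact ENNReal.ofReal_lt_top
  have habs : AbsContOn Sf 0 L := by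
    refine ⟨mm, hmmint, ?_⟩
    intro v u hv hvu huL
    have hvm : v ∈ Icc 0 L := ⟨hv, hvu.trans huL⟩
    have hum : u ∈ Icc 0 L := ⟨hv.trans hvu, huL⟩
    rw [hmmlint v hvm u hum hvu]
    have h2 := hSfmono hvm hum hvu
    rw [Real.dist_eq, abs_of_nonpos (by linarith), neg_sub]
  refine ⟨0, L, Sf, hL0, hSfmono, habs, hSf0, hSfL, ?_, ?_, ?_⟩
  · apply LipschitzOnWith.of_dist_le_mul
    intro τ1 h1 τ2 h2
    rw [NNReal.coe_one, one_mul]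
    rcases le_total τ1 τ2 with h | h
    · have hk := hkey (Sf τ1) (hSfab τ1 h1) (Sf τ2) (hSfab τ2 h2) (hSfmono h1 h2 h)
      rw [hσSf τ1 h1, hσSf τ2 h2] at hk
      calc dist (γ (Sf τ1)) (γ (Sf τ2)) ≤ τ2 - τ1 := hk
        _ ≤ dist τ1 τ2 := by
            rw [Real.dist_eq, abs_sub_comm]
            exact le_abs_self _
    · have hk := hkey (Sf τ2) (hSfab τ2 h2) (Sf τ1) (hSfab τ1 h1) (hSfmono h2 h1 h)
      rw [hσSf τ1 h1, hσSf τ2 h2] at hk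
      rw [dist_comm]
      calc dist (γ (Sf τ2)) (γ (Sf τ1)) ≤ τ1 - τ2 := hk
        _ ≤ dist τ1 τ2 := by
            rw [Real.dist_eq]
            exact le_abs_self _
  · intro τ1 h1 τ2 h2 h12
    exact hanti (hSfab τ1 h1) (hSfab τ2 h2) (hSfmono h1 h2 h12)
  · rw [hre2]
    have hPae2 : ∀ᵐ t ∂(volume.restrict (Icc a b)),
        (ENNReal.ofReal (g0 t) = limSlope f (γ t) ∧ 0 < g0 t) ∧ HasDerivAt σ (g0 t) t ∧
        ∃ d : ℝ, HasDerivAt (fun τ => (f (γ τ)).toReal) d t ∧ g0 t ^ 2 ≤ -d := by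
      filter_upwards [hgood, ae_restrict_of_ae (aux_ftc hg0int a), hdesc] with t h1 h2 h3
      obtain ⟨d, hd1, hd2⟩ := h3
      refine ⟨⟨h1.1, h1.2.1⟩, h2, d, hd1, ?_⟩
      rw [← h1.1] at hd2
      have hg2 : (ENNReal.ofReal (g0 t)) ^ 2 = ENNReal.ofReal (g0 t ^ 2) :=
        (ENNReal.ofReal_pow (hg0nn t) 2).symm
      rw [hg2] at hd2
      have hdpos : 0 < -d := by
        by_contra hc
        push_neg at hc
        have hz : ENNReal.ofReal (g0 t ^ 2) = 0 :=
          le_antisymm (hd2.trans_eq (ENNReal.ofReal_of_nonpos hc)) zero_le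
        rw [ENNReal.ofReal_eq_zero] at hz
        nlinarith [h1.2.1]
      exact (ENNReal.ofReal_le_ofReal_iff hdpos.le).mp hd2
    filter_upwards [htrans _ hPae2, ae_restrict_mem measurableSet_Ioo] with τ hτP hτ
    obtain ⟨⟨heq, hpos⟩, hσderiv, d, hd, hd2⟩ := hτP
    have hScτ : ContinuousAt Sf τ := hSfcont τ hτ
    have hlocinv : ∀ᶠ u in 𝓝 τ, σ (Sf u) = u := by
      filter_upwards [Ioo_mem_nhds hτ.1 hτ.2] with u hu
      exact hσSf u (Ioo_subset_Icc_self hu)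
    have hSd : HasDerivAt Sf (g0 (Sf τ))⁻¹ τ :=
      hσderiv.of_local_left_inverse hScτ (ne_of_gt hpos) hlocinv
    refine ⟨d * (g0 (Sf τ))⁻¹, HasDerivAt.comp τ hd hSd, ?_⟩
    rw [← heq]
    apply ENNReal.ofReal_le_ofReal
    have hdneg : d < 0 := by nlinarith
    rw [abs_mul, abs_inv, abs_of_pos hpos, abs_of_neg hdneg, ← div_eq_mul_inv,
      le_div_iff₀ hpos]
    nlinarith
end

section
/- Let f : H → ℝ∪{±∞} be a lower-semicontinuous function on a finite-dimensional real inner product space H, and let x̄ be a point with f(x̄) finite. Then |∇f|(x̄) ≤ d(0, ∂̂f(x̄)), and furthermore the limiting slope satisfies |∇f|⁻(x̄) = d(0, ∂f(x̄)) (with the convention that the distance to the empty set is +∞). In particular, |∇f|⁻(x̄) = 0 if and only if 0 ∈ ∂f(x̄). -/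
open Filter Topology MeasureTheory Set NNReal ENNReal Pointwise

section SlopeAux

open Filter Topology EMetric

/-! ### `EReal.toENNReal'` helpers -/

lemma toENNReal'_coe (a : ℝ) : (EReal.toENNReal' (a : EReal)) = ENNReal.ofReal a := by
  simp [EReal.toENNReal']

lemma toENNReal'_le_ofReal {x : EReal} {s : ℝ} (h : x ≤ (s : EReal)) :
    x.toENNReal' ≤ ENNReal.ofReal s := by
  induction x using EReal.rec with
  | bot => simp [EReal.toENNReal']
  | coe a =>
    rw [toENNReal'_coe]
    exact ENNReal.ofReal_le_ofReal (EReal.coe_le_coe_iff.1 h)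
  | top => exact absurd h (by simp)

lemma le_coe_of_toENNReal'_le {x : EReal} {s : ℝ} (h0 : 0 ≤ s)
    (h : x.toENNReal' ≤ ENNReal.ofReal s) : x ≤ (s : EReal) := by
  induction x using EReal.rec with
  | bot => exact bot_le
  | coe a =>
    rw [toENNReal'_coe] at h
    exact EReal.coe_le_coe_iff.2 (by
      by_cases ha : a ≤ 0
      · linarith
      · exact (ENNReal.ofReal_le_ofReal_iff h0).1 h)
  | top =>
    exfalso
    have : EReal.toENNReal' ⊤ = ⊤ := by simp [EReal.toENNReal']
    rw [this] at h
    exact (lt_irrefl ⊤ (lt_of_le_of_lt h ENNReal.ofReal_lt_top))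

/-! ### EReal arithmetic helpers -/

lemma le_of_coe_sub_le {e : EReal} {rx s : ℝ} (h : (rx : EReal) - e ≤ (s : EReal)) :
    ((rx - s : ℝ) : EReal) ≤ e := by
  induction e using EReal.rec with
  | bot =>
    exfalso
    rw [EReal.coe_sub_bot] at h
    exact absurd h (by simp)
  | coe a =>
    rw [← EReal.coe_sub] at h
    exact EReal.coe_le_coe_iff.2 (by linarith [EReal.coe_le_coe_iff.1 h])
  | top => exact le_top

lemma coe_le_of_coe_le_add {e : EReal} {p q : ℝ} (h : (q : EReal) ≤ e + (p : EReal)) :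
    ((q - p : ℝ) : EReal) ≤ e := by
  induction e using EReal.rec with
  | bot => rw [EReal.bot_add] at h; exact absurd h (by simp)
  | coe a =>
    rw [← EReal.coe_add] at h
    exact EReal.coe_le_coe_iff.2 (by linarith [EReal.coe_le_coe_iff.1 h])
  | top => exact le_top

lemma bot_lt_add_coe {a : EReal} {b : ℝ} (ha : (⊥ : EReal) < a) : (⊥ : EReal) < a + (b : EReal) := by
  induction a using EReal.rec with
  | bot => exact absurd ha (lt_irrefl _)
  | coe u => rw [← EReal.coe_add]; exact EReal.bot_lt_coe _
  | top => rw [EReal.top_add_coe]; exact bot_lt_top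

/-! ### Lower semicontinuity of `f + continuous` and minimization -/

lemma lsc_add_cont {H : Type*} [NormedAddCommGroup H] {f : H → EReal}
    (hf : LowerSemicontinuous f) {p : H → ℝ} (hp : Continuous p) :
    LowerSemicontinuous fun z => f z + ((p z : ℝ) : EReal) := by
  intro z0 c hc
  change c < f z0 + ((p z0 : ℝ) : EReal) at hc
  induction c using EReal.rec with
  | bot =>
    have h0 : (⊥ : EReal) < f z0 := by
      by_contra h
      push_neg at h
      rw [le_bot_iff] at h
      rw [h, EReal.bot_add] at hc
      exact lt_irrefl _ hc
    filter_upwards [hf z0 ⊥ h0] with z hz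
    exact bot_lt_add_coe hz
  | top => exact absurd hc not_top_lt
  | coe cr =>
    obtain ⟨a, ha, ha2⟩ : ∃ a : ℝ, (a : EReal) < f z0 ∧ cr < a + p z0 := by
      have hB : f z0 ≠ ⊥ := by
        intro hb; rw [hb, EReal.bot_add] at hc; exact absurd hc (by simp)
      rcases eq_or_ne (f z0) ⊤ with hT | hT
      · exact ⟨cr - p z0 + 1, by rw [hT]; exact EReal.coe_lt_top _, by linarith⟩
      · obtain ⟨g, hg⟩ : ∃ g : ℝ, f z0 = (g : EReal) :=
          ⟨(f z0).toReal, (EReal.coe_toReal hT hB).symm⟩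
        rw [hg, ← EReal.coe_add] at hc
        have hcg := EReal.coe_lt_coe_iff.1 hc
        exact ⟨g - (g + p z0 - cr) / 2,
          by rw [hg]; exact EReal.coe_lt_coe_iff.2 (by linarith), by linarith⟩
    set δ : ℝ := (a + p z0 - cr) / 2 with hδ
    have hδ0 : 0 < δ := by simp only [hδ]; linarith
    filter_upwards [hf z0 a ha,
      hp.continuousAt.eventually_const_lt (by linarith : p z0 - δ < p z0)] with z hz1 hz2
    have hlt : ((a + (p z0 - δ) : ℝ) : EReal) < f z + (p z : EReal) := by
      rw [EReal.coe_add]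
      exact EReal.add_lt_add hz1 (EReal.coe_lt_coe_iff.2 hz2)
    refine lt_trans (EReal.coe_lt_coe_iff.2 ?_) hlt
    linarith

lemma exists_min_lsc {H : Type*} [NormedAddCommGroup H] {G : H → EReal}
    (hG : LowerSemicontinuous G) {s : Set H} (hs : IsCompact s) (hne : s.Nonempty) :
    ∃ y ∈ s, ∀ z ∈ s, G y ≤ G z := by
  obtain ⟨u, -, hu, humem⟩ := exists_seq_tendsto_sInf (hne.image G) (OrderBot.bddBelow _)
  choose z hzs hz using humem
  obtain ⟨y, hys, φ, hφ, hyt⟩ := hs.tendsto_subseq hzs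
  refine ⟨y, hys, fun w hw =>
    le_trans ?_ (csInf_le (OrderBot.bddBelow _) (Set.mem_image_of_mem G hw))⟩
  by_contra hlt
  push_neg at hlt
  obtain ⟨c, hc1, hc2⟩ := exists_between hlt
  have h1 : ∀ᶠ n in atTop, c < G (z (φ n)) := hyt.eventually (hG y c hc2)
  have h2 : ∀ᶠ n in atTop, G (z (φ n)) < c := by
    have ht : Tendsto (fun n => u (φ n)) atTop (𝓝 (sInf (G '' s))) :=
      hu.comp hφ.tendsto_atTop
    filter_upwards [ht.eventually_lt_const hc1] with n hn
    rw [hz (φ n)]; exact hn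
  obtain ⟨n, hn1, hn2⟩ := (h1.and h2).exists
  exact lt_irrefl _ (lt_trans hn1 hn2)

variable {H : Type*} [NormedAddCommGroup H] [InnerProductSpace ℝ H]

/-! ### Slope bound from a Fréchet subgradient -/

lemma mSlope_le_edist (f : H → EReal) (y v : H) (hv : v ∈ frechetSubdiff f y) :
    mSlope f y ≤ edist 0 v := by
  obtain ⟨⟨ry, hry⟩, hsub⟩ := hv
  have key : ∀ ε : ℝ, 0 < ε → mSlope f y ≤ ENNReal.ofReal (‖v‖ + ε) := by
    intro ε hε
    have hev2 : ∀ᶠ z in 𝓝[≠] y,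
        (f y - f z).toENNReal' / edist y z ≤ ENNReal.ofReal (‖v‖ + ε) := by
      filter_upwards [nhdsWithin_le_nhds (hsub ε hε)] with z hz
      have h1 : f y - f z ≤ (((‖v‖ + ε) * ‖z - y‖ : ℝ) : EReal) := by
        rw [hry] at hz ⊢
        rw [← EReal.coe_add] at hz
        calc (ry : EReal) - f z
            ≤ (ry : EReal) - ((ry + ((inner ℝ v (z - y) : ℝ) - ε * ‖z - y‖) : ℝ) : EReal) :=
              EReal.sub_le_sub le_rfl hz
          _ = ((-( (inner ℝ v (z - y) : ℝ) - ε * ‖z - y‖) : ℝ) : EReal) := by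
              rw [← EReal.coe_sub]; norm_num
          _ ≤ (((‖v‖ + ε) * ‖z - y‖ : ℝ) : EReal) := by
              refine EReal.coe_le_coe_iff.2 ?_
              have h2 := abs_real_inner_le_norm v (z - y)
              have h3 := neg_abs_le (inner ℝ v (z - y) : ℝ)
              nlinarith [norm_nonneg (z - y)]
      have h2 : (f y - f z).toENNReal' ≤ ENNReal.ofReal (‖v‖ + ε) * edist y z := by
        rw [edist_dist, dist_eq_norm, norm_sub_rev y z,
          ← ENNReal.ofReal_mul (by positivity)]
        exact toENNReal'_le_ofReal h1
      exact ENNReal.div_le_of_le_mul h2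
    unfold mSlope
    exact Filter.limsup_le_of_le (h := hev2)
  have hev : edist 0 v = ENNReal.ofReal ‖v‖ := by
    rw [edist_comm, edist_dist, dist_zero_right]
  rw [hev]
  refine ENNReal.le_of_forall_pos_le_add fun ε hε _ => ?_
  calc mSlope f y ≤ ENNReal.ofReal (‖v‖ + ε) := key ε hε
    _ = ENNReal.ofReal ‖v‖ + ↑ε := by
        rw [ENNReal.ofReal_add (norm_nonneg v) ε.coe_nonneg, ENNReal.ofReal_coe_nnreal]

end SlopeAux

section SlopeKey

open Filter Topology EMetric

variable {H : Type*} [NormedAddCommGroup H] [InnerProductSpace ℝ H] [FiniteDimensional ℝ H]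

/-- Key existence lemma: near a point of slope `< r` one finds a Fréchet
subgradient of norm at most `(1+σ) r`. -/
lemma keyB (f : H → EReal) (hf : LowerSemicontinuous f) (x : H) (rx : ℝ)
    (hfx : f x = (rx : EReal)) (r : ℝ) (hr : 0 < r)
    (hslope : mSlope f x < ENNReal.ofReal r) (ε σ : ℝ) (hε : 0 < ε) (hσ0 : 0 < σ)
    (hσ1 : σ ≤ 1) :
    ∃ y v : H, v ∈ frechetSubdiff f y ∧ ‖y - x‖ ≤ ε ∧ f y ≤ f x ∧
      ((rx - ε : ℝ) : EReal) ≤ f y ∧ ‖v‖ ≤ (1 + σ) * r := by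
  classical
  -- step 1: a ball on which the slope inequality holds
  have hslope' : Filter.limsup (fun z => (f x - f z).toENNReal' / edist x z) (𝓝[≠] x) <
      ENNReal.ofReal r := hslope
  have hev : ∀ᶠ z in 𝓝[≠] x, (f x - f z).toENNReal' / edist x z < ENNReal.ofReal r :=
    Filter.eventually_lt_of_limsup_lt hslope'
  obtain ⟨δ0, hδ0, hball⟩ := Metric.mem_nhdsWithin_iff.1 hev
  have hlow : ∀ z : H, dist z x < δ0 → ((rx - r * ‖z - x‖ : ℝ) : EReal) ≤ f z := by
    intro z hz
    rcases eq_or_ne z x with rfl | hne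
    · simp [hfx]
    · have hq : (f x - f z).toENNReal' / edist x z < ENNReal.ofReal r :=
        hball ⟨Metric.mem_ball.2 hz, hne⟩
      have he0 : edist x z ≠ 0 := by
        simp only [ne_eq, edist_eq_zero]
        exact hne.symm
      rw [ENNReal.div_lt_iff (Or.inl he0) (Or.inl (edist_ne_top x z))] at hq
      have hq2 : (f x - f z).toENNReal' ≤ ENNReal.ofReal (r * ‖z - x‖) := by
        refine le_trans hq.le (le_of_eq ?_)
        rw [edist_dist, dist_eq_norm, norm_sub_rev x z, ← ENNReal.ofReal_mul hr.le]
      have h2 : f x - f z ≤ ((r * ‖z - x‖ : ℝ) : EReal) :=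
        le_coe_of_toENNReal'_le (by positivity) hq2
      rw [hfx] at h2
      exact le_of_coe_sub_le h2
  -- step 2: parameters
  set m : ℝ := min (min ε (δ0 / 2)) (ε / r) with hmdef
  have hm0 : 0 < m := lt_min (lt_min hε (by linarith)) (by positivity)
  set e : ℝ := (1 + σ) / 2 with hedef
  have he0 : 0 < e := by simp only [hedef]; linarith
  set c : ℝ := r / m ^ σ with hcdef
  have hmσ : (0 : ℝ) < m ^ σ := Real.rpow_pos_of_pos hm0 σ
  have hc0 : 0 < c := div_pos hr hmσ
  set p : H → ℝ := fun z => c * (‖z - x‖ ^ 2) ^ e with hpdef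
  have hpow : ∀ s : ℝ, 0 ≤ s → ((s ^ 2 : ℝ) ^ e) = s ^ (1 + σ) := by
    intro s hs
    rw [← Real.rpow_natCast s 2, ← Real.rpow_mul hs]
    congr 1
    rw [hedef]
    push_cast
    ring
  have hsplit : ∀ s : ℝ, 0 ≤ s → s ^ (1 + σ) = s ^ σ * s := by
    intro s hs
    rcases eq_or_lt_of_le hs with rfl | hs'
    · rw [Real.zero_rpow (by positivity : (0:ℝ) < 1 + σ).ne',
        Real.zero_rpow hσ0.ne', zero_mul]
    · rw [Real.rpow_add hs', Real.rpow_one]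
      exact mul_comm s (s ^ σ)
  have hp0 : ∀ z, 0 ≤ p z := by
    intro z
    have := Real.rpow_nonneg (by positivity : (0:ℝ) ≤ ‖z - x‖ ^ 2) e
    positivity
  have hpx : p x = 0 := by
    have hn0 : ‖x - x‖ = 0 := by simp
    simp only [hpdef, hn0]
    rw [show ((0:ℝ) ^ 2 : ℝ) = 0 from by norm_num, Real.zero_rpow he0.ne', mul_zero]
  have hpcont : Continuous p := by
    apply continuous_const.mul
    exact (((continuous_id.sub continuous_const).norm.pow 2).rpow_const fun z => Or.inr he0.le)
  set G : H → EReal := fun z => f z + ((p z : ℝ) : EReal) with hGdef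
  have hG : LowerSemicontinuous G := lsc_add_cont hf hpcont
  set δ : ℝ := 3 * δ0 / 4 with hδdef
  have hδpos : 0 < δ := by simp only [hδdef]; linarith
  have hsubball : Metric.closedBall x δ ⊆ Metric.ball x δ0 := by
    intro z hz
    rw [Metric.mem_closedBall] at hz
    rw [Metric.mem_ball]
    simp only [hδdef] at hz
    linarith
  obtain ⟨y, hy, hmin⟩ := exists_min_lsc hG (isCompact_closedBall x δ)
    ⟨x, Metric.mem_closedBall_self hδpos.le⟩
  have hGx : G x = (rx : EReal) := by
    simp only [hGdef, hpx, hfx, EReal.coe_zero, add_zero]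
  have hGyx : G y ≤ (rx : EReal) := by
    have := hmin x (Metric.mem_closedBall_self hδpos.le)
    rwa [hGx] at this
  have hyball : dist y x < δ0 := Metric.mem_ball.1 (hsubball hy)
  have hylow : ((rx - r * ‖y - x‖ : ℝ) : EReal) ≤ f y := hlow y hyball
  have hfyB : f y ≠ ⊥ := (lt_of_lt_of_le (EReal.bot_lt_coe _) hylow).ne'
  have hfyT : f y ≠ ⊤ := by
    intro h
    rw [show G y = ⊤ by simp only [hGdef, h, EReal.top_add_coe]] at hGyx
    exact absurd hGyx (by simp)
  obtain ⟨ry, hfy⟩ : ∃ ry : ℝ, f y = (ry : EReal) :=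
    ⟨(f y).toReal, (EReal.coe_toReal hfyT hfyB).symm⟩
  set t : ℝ := ‖y - x‖ with htdef
  have ht0 : 0 ≤ t := norm_nonneg _
  have h1 : ry + p y ≤ rx := by
    have : ((ry + p y : ℝ) : EReal) ≤ (rx : EReal) := by
      rw [EReal.coe_add]
      rw [hGdef] at hGyx
      simp only at hGyx
      rw [hfy] at hGyx
      exact hGyx
    exact EReal.coe_le_coe_iff.1 this
  have h2 : rx - r * t ≤ ry := by
    rw [hfy] at hylow
    exact EReal.coe_le_coe_iff.1 hylow
  have hpyt : p y = c * t ^ (1 + σ) := by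
    simp only [hpdef]
    rw [hpow t ht0]
  have hprt : c * t ^ (1 + σ) ≤ r * t := by
    rw [← hpyt]; linarith
  have hkey : t = 0 ∨ (0 < t ∧ c * t ^ σ ≤ r) := by
    rcases eq_or_lt_of_le ht0 with h | h
    · exact Or.inl h.symm
    · refine Or.inr ⟨h, ?_⟩
      rw [hsplit t ht0] at hprt
      have := (mul_le_mul_iff_left₀ h).1 (by linarith : (c * t ^ σ) * t ≤ r * t)
      linarith
  have htm : t ≤ m := by
    rcases hkey with h | ⟨hpos, hbd⟩
    · rw [h]; exact hm0.le
    · by_contra hcon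
      push_neg at hcon
      have h3 : m ^ σ < t ^ σ := Real.rpow_lt_rpow hm0.le hcon hσ0
      have h4 : c * m ^ σ = r := by
        rw [hcdef]; field_simp
      nlinarith
  have htmε : t ≤ ε := le_trans htm (le_trans (min_le_left _ _) (min_le_left _ _))
  have htmδ : t ≤ δ0 / 2 := le_trans htm (le_trans (min_le_left _ _) (min_le_right _ _))
  have htmεr : r * t ≤ ε := by
    have : t ≤ ε / r := le_trans htm (min_le_right _ _)
    calc r * t ≤ r * (ε / r) := by nlinarith
      _ = ε := by field_simp
  have hyε : ‖y - x‖ ≤ ε := htmε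
  have hfyfx : f y ≤ f x := by
    rw [hfy, hfx]
    exact EReal.coe_le_coe_iff.2 (by linarith [hp0 y])
  have hfylow : ((rx - ε : ℝ) : EReal) ≤ f y := by
    rw [hfy]
    exact EReal.coe_le_coe_iff.2 (by linarith)
  -- the eventual minimization inequality
  have hyint : dist y x < δ := by
    rw [dist_eq_norm]
    calc ‖y - x‖ ≤ δ0 / 2 := htmδ
      _ < δ := by simp only [hδdef]; linarith
  have hnear : ∀ᶠ z in 𝓝 y, ((ry + p y - p z : ℝ) : EReal) ≤ f z := by
    filter_upwards [Metric.closedBall_mem_nhds_of_mem (Metric.mem_ball.2 hyint)] with z hz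
    have hGz := hmin z hz
    rw [hGdef] at hGz
    simp only at hGz
    rw [hfy, ← EReal.coe_add] at hGz
    exact coe_le_of_coe_le_add hGz
  rcases hkey with hteq | ⟨htpos, hbd⟩
  · -- case y = x, v = 0
    have hyx : y = x := by
      have : y - x = 0 := by rwa [← norm_eq_zero, ← htdef]
      exact sub_eq_zero.1 this
    refine ⟨y, 0, ⟨⟨ry, hfy⟩, ?_⟩, hyε, hfyfx, hfylow, by simp; positivity⟩
    intro ε' hε'
    have hpy0 : p y = 0 := by rw [hyx]; exact hpx
    have hcont2 : Continuous fun z : H => c * ‖z - y‖ ^ σ :=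
      continuous_const.mul ((continuous_id.sub continuous_const).norm.rpow_const
        fun z => Or.inr hσ0.le)
    have hlim : Tendsto (fun z : H => c * ‖z - y‖ ^ σ) (𝓝 y) (𝓝 0) := by
      have h0 : c * ‖y - y‖ ^ σ = 0 := by
        simp [Real.zero_rpow hσ0.ne']
      have := hcont2.continuousAt (x := y)
      rwa [ContinuousAt, h0] at this
    filter_upwards [hnear, hlim.eventually_le_const hε'] with z hz1 hz2
    have hpz : p z ≤ ε' * ‖z - y‖ := by
      have hnn : (0:ℝ) ≤ ‖z - y‖ := norm_nonneg _
      have : p z = c * ‖z - y‖ ^ σ * ‖z - y‖ := by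
        simp only [hpdef, hyx]
        rw [hpow _ (norm_nonneg _), hsplit _ (norm_nonneg _)]
        ring
      rw [this]
      exact mul_le_mul_of_nonneg_right hz2 hnn
    have : ((ry + ((inner ℝ (0:H) (z - y) : ℝ) - ε' * ‖z - y‖) : ℝ) : EReal) ≤ f z := by
      refine le_trans (EReal.coe_le_coe_iff.2 ?_) hz1
      rw [inner_zero_left]
      rw [hpy0]
      linarith
    rw [hfy, ← EReal.coe_add]
    exact this
  · -- case y ≠ x
    have hyx : y - x ≠ 0 := by
      rw [← norm_pos_iff] at *
      exact htpos
    have hqy : (0:ℝ) < ‖y - x‖ ^ 2 := by positivity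
    have hd1 : HasFDerivAt (fun z : H => ‖z - x‖ ^ 2)
        ((2:ℕ) • (innerSL ℝ (y - x)).comp (ContinuousLinearMap.id ℝ H)) y :=
      ((hasFDerivAt_id y).sub_const x).norm_sq
    have hd2 : HasFDerivAt (fun z : H => (‖z - x‖ ^ 2) ^ e)
        ((e * (‖y - x‖ ^ 2) ^ (e - 1)) •
          ((2:ℕ) • (innerSL ℝ (y - x)).comp (ContinuousLinearMap.id ℝ H))) y :=
      hd1.rpow_const (Or.inl (ne_of_gt hqy))
    have hd3 : HasFDerivAt p
        (c • ((e * (‖y - x‖ ^ 2) ^ (e - 1)) •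
          ((2:ℕ) • (innerSL ℝ (y - x)).comp (ContinuousLinearMap.id ℝ H)))) y :=
      hd2.const_mul c
    set L := (c • ((e * (‖y - x‖ ^ 2) ^ (e - 1)) •
      ((2:ℕ) • (innerSL ℝ (y - x)).comp (ContinuousLinearMap.id ℝ H)))) with hLdef
    set a : ℝ := c * (e * (‖y - x‖ ^ 2) ^ (e - 1) * 2) with hadef
    set w : H := a • (y - x) with hwdef
    have hLw : ∀ z' : H, L z' = (inner ℝ w z' : ℝ) := by
      intro z'
      simp only [hLdef, hwdef, hadef, ContinuousLinearMap.smul_apply,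
        ContinuousLinearMap.coe_comp', Function.comp_apply,
        ContinuousLinearMap.coe_id', id_eq, innerSL_apply_apply, smul_eq_mul,
        nsmul_eq_mul, Nat.cast_ofNat, real_inner_smul_left]
      ring
    have hae : (t ^ 2 : ℝ) ^ (e - 1) = t ^ (σ - 1) := by
      rw [← Real.rpow_natCast t 2, ← Real.rpow_mul ht0]
      congr 1
      simp only [hedef]
      push_cast
      ring
    have ha_pos : 0 < a := by
      have : (0:ℝ) < (‖y - x‖ ^ 2) ^ (e - 1) := Real.rpow_pos_of_pos hqy _
      simp only [hadef]
      positivity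
    have hnw : ‖w‖ = (1 + σ) * (c * t ^ σ) := by
      rw [hwdef, norm_smul, Real.norm_eq_abs, abs_of_pos ha_pos, ← htdef, hadef, ← htdef, hae]
      have ht1 : t ^ (σ - 1) * t = t ^ σ := by
        have h := Real.rpow_add htpos (σ - 1) 1
        rw [Real.rpow_one] at h
        rw [← h]
        congr 1
        ring
      calc c * (e * t ^ (σ - 1) * 2) * t = c * (2 * e) * (t ^ (σ - 1) * t) := by ring
        _ = (1 + σ) * (c * t ^ σ) := by
            rw [ht1]
            simp only [hedef]
            ring
    refine ⟨y, -w, ⟨⟨ry, hfy⟩, ?_⟩, hyε, hfyfx, hfylow, ?_⟩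
    · intro ε' hε'
      have hlo := (Asymptotics.isLittleO_iff.1 hd3.isLittleO) hε'
      filter_upwards [hnear, hlo] with z hz1 hz2
      rw [hfy, ← EReal.coe_add]
      refine le_trans (EReal.coe_le_coe_iff.2 ?_) hz1
      have hz3 : p z - p y - L (z - y) ≤ ε' * ‖z - y‖ := by
        have habs : |p z - p y - L (z - y)| ≤ ε' * ‖z - y‖ := by
          simpa [Real.norm_eq_abs] using hz2
        exact le_trans (le_abs_self _) habs
      rw [hLw (z - y)] at hz3
      have hiv : (inner ℝ (-w) (z - y) : ℝ) = -(inner ℝ w (z - y) : ℝ) := by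
        rw [inner_neg_left]
      rw [hiv]
      linarith
    · rw [norm_neg, hnw]
      have h1σ : (0:ℝ) ≤ 1 + σ := by linarith
      exact mul_le_mul_of_nonneg_left hbd h1σ
end SlopeKey

section SlopeMain

open Filter Topology EMetric

variable {H : Type*} [NormedAddCommGroup H] [InnerProductSpace ℝ H] [FiniteDimensional ℝ H]

lemma keyC (f : H → EReal) (hf : LowerSemicontinuous f) (xc : H) (rx : ℝ)
    (hfx : f xc = (rx : EReal)) (r : ℕ → ℝ) (hr : ∀ n, 0 < r n)
    (h : ∀ n, limSlope f xc < ENNReal.ofReal (r n)) :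
    ∃ y v : ℕ → H, (∀ n, v n ∈ frechetSubdiff f (y n)) ∧
      Tendsto y atTop (𝓝 xc) ∧ Tendsto (fun n => f (y n)) atTop (𝓝 (f xc)) ∧
      ∀ n, ‖v n‖ ≤ (1 + 1 / (n + 1 : ℝ)) * r n := by
  have main : ∀ n : ℕ, ∃ y v : H, v ∈ frechetSubdiff f y ∧
      dist y xc ≤ 2 / (n + 1 : ℝ) ∧ |(f y).toReal - rx| ≤ 2 / (n + 1 : ℝ) ∧
      f y = (((f y).toReal : ℝ) : EReal) ∧ ‖v‖ ≤ (1 + 1 / (n + 1 : ℝ)) * r n := by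
    intro n
    set en : ℝ := 1 / (n + 1 : ℝ) with hendef
    have hen : 0 < en := by positivity
    have hen1 : en ≤ 1 := by
      rw [hendef]
      rw [div_le_one (by positivity)]
      linarith [(Nat.cast_nonneg n : (0:ℝ) ≤ n)]
    have h' : Filter.liminf (fun x => mSlope f x)
        (comap (fun x : H => (x, f x)) (𝓝 (xc, f xc))) < ENNReal.ofReal (r n) := h n
    have hfreq : ∃ᶠ z in comap (fun x : H => (x, f x)) (𝓝 (xc, f xc)),
        mSlope f z < ENNReal.ofReal (r n) :=
      Filter.frequently_lt_of_liminf_lt (by isBoundedDefault) h'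
    have hV : {q : H × EReal | dist q.1 xc < en / 2 ∧
        q.2 ∈ Set.Ioo ((rx - en / 2 : ℝ) : EReal) ((rx + en / 2 : ℝ) : EReal)} ∈
        𝓝 (xc, f xc) := by
      have h1 : {z : H | dist z xc < en / 2} ∈ 𝓝 xc := by
        have := Metric.ball_mem_nhds xc (by positivity : (0:ℝ) < en / 2)
        simpa [Metric.ball] using this
      have h2 : Set.Ioo ((rx - en / 2 : ℝ) : EReal) ((rx + en / 2 : ℝ) : EReal) ∈
          𝓝 (f xc) := by
        rw [hfx]
        refine isOpen_Ioo.mem_nhds ?_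
        constructor
        · exact EReal.coe_lt_coe_iff.2 (by linarith)
        · exact EReal.coe_lt_coe_iff.2 (by linarith)
      exact prod_mem_nhds h1 h2
    obtain ⟨z, hz1, hz2⟩ := (hfreq.and_eventually (Filter.preimage_mem_comap hV)).exists
    obtain ⟨hzd, hzlo, hzhi⟩ : dist z xc < en / 2 ∧
        ((rx - en / 2 : ℝ) : EReal) < f z ∧ f z < ((rx + en / 2 : ℝ) : EReal) :=
      ⟨hz2.1, hz2.2.1, hz2.2.2⟩
    have hzT : f z ≠ ⊤ := hzhi.ne_top
    have hzB : f z ≠ ⊥ := hzlo.ne_bot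
    set rz : ℝ := (f z).toReal with hrzdef
    have hfz : f z = (rz : EReal) := (EReal.coe_toReal hzT hzB).symm
    have hrzlo : rx - en / 2 < rz := by
      rw [hfz] at hzlo; exact EReal.coe_lt_coe_iff.1 hzlo
    have hrzhi : rz < rx + en / 2 := by
      rw [hfz] at hzhi; exact EReal.coe_lt_coe_iff.1 hzhi
    obtain ⟨y, v, hmem, hyz, hfy1, hfy2, hvn⟩ :=
      keyB f hf z rz hfz (r n) (hr n) hz1 (en / 2) en (by positivity) hen hen1
    have hfyT : f y ≠ ⊤ := by
      intro hT; rw [hT, hfz] at hfy1; exact absurd hfy1 (by simp)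
    have hfyB : f y ≠ ⊥ := (lt_of_lt_of_le (EReal.bot_lt_coe _) hfy2).ne'
    set ry : ℝ := (f y).toReal with hrydef
    have hfy : f y = (ry : EReal) := (EReal.coe_toReal hfyT hfyB).symm
    have hryhi : ry ≤ rz := by
      rw [hfy, hfz] at hfy1; exact EReal.coe_le_coe_iff.1 hfy1
    have hrylo : rz - en / 2 ≤ ry := by
      rw [hfy] at hfy2; exact EReal.coe_le_coe_iff.1 hfy2
    refine ⟨y, v, hmem, ?_, ?_, hfy, hvn⟩
    · calc dist y xc ≤ dist y z + dist z xc := dist_triangle _ _ _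
        _ ≤ en / 2 + en / 2 := by
            refine add_le_add ?_ hzd.le
            rw [dist_eq_norm]; exact hyz
        _ = en := by ring
        _ ≤ 2 / (n + 1 : ℝ) := by
            rw [hendef, show (2:ℝ) / ((n:ℝ)+1) = 2 * (1 / ((n:ℝ)+1)) from by ring]
            have ha : (0:ℝ) < 1 / ((n:ℝ)+1) := by positivity
            linarith
    · rw [← hrydef, abs_le]
      rw [hendef] at hrzlo hrzhi hrylo
      have ha : (0:ℝ) < 1 / ((n:ℝ)+1) := by positivity
      rw [show (2:ℝ) / ((n:ℝ)+1) = 2 * (1 / ((n:ℝ)+1)) from by ring]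
      constructor <;> linarith
  choose y v hmem hd hfd hfr hvn using main
  refine ⟨y, v, hmem, ?_, ?_, hvn⟩
  · rw [tendsto_iff_dist_tendsto_zero]
    refine squeeze_zero (fun n => dist_nonneg) hd ?_
    have h2 : Tendsto (fun n : ℕ => 2 / (n + 1 : ℝ)) atTop (𝓝 0) := by
      have := tendsto_one_div_add_atTop_nhds_zero_nat (𝕜 := ℝ)
      have h22 := this.const_mul (2:ℝ)
      simpa [div_eq_mul_inv, mul_comm] using h22
    exact h2
  · have hre : Tendsto (fun n => (f (y n)).toReal) atTop (𝓝 rx) := by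
      rw [tendsto_iff_dist_tendsto_zero]
      simp only [Real.dist_eq]
      refine squeeze_zero (fun n => abs_nonneg _) hfd ?_
      have := tendsto_one_div_add_atTop_nhds_zero_nat (𝕜 := ℝ)
      have h22 := this.const_mul (2:ℝ)
      simpa [div_eq_mul_inv, mul_comm] using h22
    have hco : Tendsto (fun n => (((f (y n)).toReal : ℝ) : EReal)) atTop (𝓝 ((rx : ℝ) : EReal)) :=
      (continuous_coe_real_ereal.tendsto _).comp hre
    rw [hfx]
    exact hco.congr fun n => (hfr n).symm

end SlopeMain

/-- Slope and subdifferentials. -/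
theorem statement9 {H : Type*} [NormedAddCommGroup H] [InnerProductSpace ℝ H]
    [FiniteDimensional ℝ H]
    (f : H → EReal) (hf : LowerSemicontinuous f)
    (xc : H) (hfin : ∃ r : ℝ, f xc = (r : EReal)) :
    mSlope f xc ≤ EMetric.infEdist 0 (frechetSubdiff f xc) ∧
    limSlope f xc = EMetric.infEdist 0 (limitingSubdiff f xc) ∧
    (limSlope f xc = 0 ↔ (0 : H) ∈ limitingSubdiff f xc) := by
  classical
  obtain ⟨rx, hfx⟩ := hfin
  -- Part 1
  have part1 : mSlope f xc ≤ EMetric.infEdist 0 (frechetSubdiff f xc) :=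
    EMetric.le_infEdist.2 fun v hv => mSlope_le_edist f xc v hv
  -- Part 2, ≤ direction
  have le2 : limSlope f xc ≤ EMetric.infEdist 0 (limitingSubdiff f xc) := by
    refine EMetric.le_infEdist.2 fun v hv => ?_
    obtain ⟨-, y, w, hw, hy, hfy, hwv⟩ := hv
    have hmap : Filter.map y atTop ≤ comap (fun x : H => (x, f x)) (𝓝 (xc, f xc)) := by
      rw [← Filter.tendsto_id']
      rw [Filter.tendsto_comap_iff]
      exact hy.prodMk_nhds hfy
    calc limSlope f xc
        ≤ Filter.liminf (mSlope f) (Filter.map y atTop) :=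
          Filter.liminf_le_liminf_of_le hmap
      _ = Filter.liminf (fun n => mSlope f (y n)) atTop := (Filter.liminf_comp _ _ _).symm
      _ ≤ Filter.liminf (fun n => edist 0 (w n)) atTop := by
          refine Filter.liminf_le_liminf ?_
          exact Filter.Eventually.of_forall fun n => mSlope_le_edist f (y n) (w n) (hw n)
      _ = edist 0 v := (Filter.Tendsto.edist tendsto_const_nhds hwv).liminf_eq
  -- Part 2, ≥ direction
  have ge2 : EMetric.infEdist 0 (limitingSubdiff f xc) ≤ limSlope f xc := by
    refine ENNReal.le_of_forall_pos_le_add fun ε hε hfin' => ?_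
    set r : ℝ := (limSlope f xc).toReal + ε with hrdef
    have hr0 : 0 < r := by
      have := ENNReal.toReal_nonneg (a := limSlope f xc)
      have hε' : (0:ℝ) < ε := hε
      rw [hrdef]; linarith
    have hofr : ENNReal.ofReal r = limSlope f xc + (ε : ℝ≥0∞) := by
      rw [hrdef, ENNReal.ofReal_add ENNReal.toReal_nonneg ε.coe_nonneg,
        ENNReal.ofReal_toReal hfin'.ne, ENNReal.ofReal_coe_nnreal]
    have hlt : limSlope f xc < ENNReal.ofReal r := by
      rw [hofr]
      exact ENNReal.lt_add_right hfin'.ne (by exact_mod_cast hε.ne')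
    obtain ⟨y, v, hmem, hy, hfy, hvn⟩ :=
      keyC f hf xc rx hfx (fun _ => r) (fun _ => hr0) (fun _ => hlt)
    have hvb : ∀ n, v n ∈ Metric.closedBall (0 : H) (2 * r) := by
      intro n
      rw [mem_closedBall_zero_iff]
      have h1 : 1 / ((n : ℝ) + 1) ≤ 1 := by
        rw [div_le_one (by positivity)]
        linarith [(Nat.cast_nonneg n : (0:ℝ) ≤ n)]
      calc ‖v n‖ ≤ (1 + 1 / (n + 1 : ℝ)) * r := hvn n
        _ ≤ 2 * r := by nlinarith
    obtain ⟨w, hwball, φ, hφ, hwt⟩ :=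
      (isCompact_closedBall (0 : H) (2 * r)).tendsto_subseq hvb
    have hwmem : w ∈ limitingSubdiff f xc := by
      refine ⟨⟨rx, hfx⟩, fun n => y (φ n), fun n => v (φ n), fun n => hmem (φ n),
        hy.comp hφ.tendsto_atTop, hfy.comp hφ.tendsto_atTop, hwt⟩
    have hwn : ‖w‖ ≤ r := by
      have hnt : Tendsto (fun n => ‖v (φ n)‖) atTop (𝓝 ‖w‖) :=
        (continuous_norm.tendsto _).comp hwt
      have hrt : Tendsto (fun n : ℕ => (1 + 1 / ((φ n : ℝ) + 1)) * r) atTop (𝓝 ((1 + 0) * r)) := by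
        refine Filter.Tendsto.mul_const r ?_
        refine tendsto_const_nhds.add ?_
        have hbase : Tendsto (fun n : ℕ => 1 / ((n : ℝ) + 1)) atTop (𝓝 0) :=
          tendsto_one_div_add_atTop_nhds_zero_nat
        exact hbase.comp hφ.tendsto_atTop
      have := le_of_tendsto_of_tendsto hnt hrt
        (Filter.Eventually.of_forall fun n => hvn (φ n))
      simpa using this
    calc EMetric.infEdist 0 (limitingSubdiff f xc) ≤ edist 0 w :=
          EMetric.infEdist_le_edist_of_mem hwmem
      _ = ENNReal.ofReal ‖w‖ := by rw [edist_comm, edist_dist, dist_zero_right]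
      _ ≤ ENNReal.ofReal r := ENNReal.ofReal_le_ofReal hwn
      _ = limSlope f xc + ε := hofr
  have part2 : limSlope f xc = EMetric.infEdist 0 (limitingSubdiff f xc) :=
    le_antisymm le2 ge2
  refine ⟨part1, part2, ?_, ?_⟩
  · -- limSlope = 0 → 0 ∈ ∂f
    intro h0
    have hlt : ∀ n : ℕ, limSlope f xc < ENNReal.ofReal (1 / (n + 1 : ℝ)) := by
      intro n
      rw [h0]
      exact ENNReal.ofReal_pos.2 (by positivity)
    obtain ⟨y, v, hmem, hy, hfy, hvn⟩ :=
      keyC f hf xc rx hfx (fun n => 1 / (n + 1 : ℝ)) (fun n => by positivity) hlt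
    have hv0 : Tendsto v atTop (𝓝 (0 : H)) := by
      rw [tendsto_zero_iff_norm_tendsto_zero]
      have hub : ∀ n : ℕ, ‖v n‖ ≤ (1 + 1 / ((n:ℝ) + 1)) * (1 / ((n:ℝ) + 1)) := hvn
      refine squeeze_zero (fun n => norm_nonneg _) hub ?_
      · have hbase : Tendsto (fun n : ℕ => 1 / ((n : ℝ) + 1)) atTop (𝓝 0) :=
          tendsto_one_div_add_atTop_nhds_zero_nat
        have : Tendsto (fun n : ℕ => (1 + 1 / ((n : ℝ) + 1)) * (1 / ((n : ℝ) + 1))) atTop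
            (𝓝 ((1 + 0) * 0)) := (tendsto_const_nhds.add hbase).mul hbase
        simpa using this
    exact ⟨⟨rx, hfx⟩, y, v, hmem, hy, hfy, hv0⟩
  · -- 0 ∈ ∂f → limSlope = 0
    intro h0
    refine le_antisymm ?_ zero_le
    rw [part2]
    exact (EMetric.infEdist_zero_of_mem h0).le
end
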